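/- arXiv:2112.07540 — 9 statements merged into one kernel-verified Lean document; each statement's English description precedes it below -/
import Mathlib

section
/- Let 1 < p < q < 5, and let h_0, t_0 be the unique positive zeros of L and K' respectively, where L(s) = -\frac{2}{p+1} s^{(p-1)/2} + \frac{2}{q+1} s^{(q-1)/2} and K(s) = -\frac{5-p}{p+1} s^{(p-1)/2} + \frac{5-q}{q+1} s^{(q-1)/2}. Then h_0 < t_0 if and only if p + q > 6. -/
theorem stmt_2 (p q : ℝ) (hp : 1 < p) (hpq : p < q) (hq : q < 5)
    (h₀ t₀ : ℝ) (hh₀ : 0 < h₀) (ht₀ : 0 < t₀)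
    (hh : h₀ ^ ((q-1)/2 - (p-1)/2) = (q+1)/(p+1))
    (ht : t₀ ^ ((q-1)/2 - (p-1)/2) =
      (5-p)*(q+1)*((p-1)/2) / ((p+1)*(5-q)*((q-1)/2))) :
    h₀ < t₀ ↔ p + q > 6 := by
  have he : (0:ℝ) < (q-1)/2 - (p-1)/2 := by linarith
  have h1 : (0:ℝ) < p + 1 := by linarith
  have h2 : (0:ℝ) < 5 - q := by linarith
  have h3 : (0:ℝ) < q - 1 := by linarith
  have key : h₀ < t₀ ↔ h₀ ^ ((q-1)/2 - (p-1)/2) < t₀ ^ ((q-1)/2 - (p-1)/2) :=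
    (Real.rpow_lt_rpow_iff hh₀.le ht₀.le he).symm
  rw [key, hh, ht, div_lt_div_iff₀ h1 (by positivity)]
  have h4 : (0:ℝ) < q + 1 := by linarith
  constructor
  · intro h
    by_contra hc
    push_neg at hc
    nlinarith [mul_nonneg (mul_nonneg (mul_nonneg h4.le h1.le)
      (show (0:ℝ) ≤ q - p by linarith)) (show (0:ℝ) ≤ 6 - (p+q) by linarith)]
  · intro h
    nlinarith [mul_pos (mul_pos (mul_pos h4 h1)
      (show (0:ℝ) < q - p by linarith)) (show (0:ℝ) < p + q - 6 by linarith)]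
end

section
/- Let 1 < p < q < 5. Set α = (p-1)/2, β = (q-1)/2, c_2 = \frac{5-q}{q+1}, d_1 = -\frac{2}{p+1}, c_1 = -\frac{5-p}{p+1}, r_1 = c_1 + d_1(q-p). Let h_0 > 0 satisfy h_0^{β-α} = \frac{q+1}{p+1} and let t_1 > 0 satisfy t_1^{β-α} = -\frac{r_1 α}{c_2 β}. Then h_0 < t_1 if and only if q > -3p + 8. -/
theorem stmt_3 (p q : ℝ) (hp : 1 < p) (hpq : p < q) (hq : q < 5)
    (α β c₁ c₂ d₁ r₁ : ℝ)
    (hα : α = (p-1)/2) (hβ : β = (q-1)/2)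
    (hc₁ : c₁ = -((5-p)/(p+1))) (hc₂ : c₂ = (5-q)/(q+1))
    (hd₁ : d₁ = -(2/(p+1))) (hr₁ : r₁ = c₁ + d₁*(q-p))
    (h₀ t₁ : ℝ) (hh₀ : 0 < h₀) (ht₁ : 0 < t₁)
    (hh : h₀ ^ (β - α) = (q+1)/(p+1))
    (ht : t₁ ^ (β - α) = -(r₁ * α) / (c₂ * β)) :
    h₀ < t₁ ↔ q > -3*p + 8 := by
  have hba : 0 < β - α := by rw [hα, hβ]; linarith
  have hp1 : (0:ℝ) < p + 1 := by linarith
  have hq1 : (0:ℝ) < q + 1 := by linarith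
  have key : h₀ < t₁ ↔ h₀ ^ (β - α) < t₁ ^ (β - α) := by
    constructor
    · intro h; exact Real.rpow_lt_rpow hh₀.le h hba
    · intro h
      by_contra hcon
      exact absurd (Real.rpow_le_rpow ht₁.le (not_lt.mp hcon) hba.le) (not_le.mpr h)
  have hApos : 0 < (p+1) * ((5-q) * (q-1)) := by
    apply mul_pos hp1 (mul_pos (by linarith) (by linarith))
  have key2 : -(r₁ * α) / (c₂ * β) - (q+1)/(p+1)
      = ((q-p)*(q+3*p-8)*(q+1)) / ((p+1) * ((5-q) * (q-1))) := by
    have h1 : p + 1 ≠ 0 := by linarith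
    have h2 : q + 1 ≠ 0 := by linarith
    have h3 : (5:ℝ) - q ≠ 0 := by linarith
    have h4 : q - 1 ≠ 0 := by linarith
    rw [hr₁, hc₁, hd₁, hα, hβ, hc₂]
    field_simp
    ring
  rw [key, hh, ht, ← sub_pos, key2, lt_div_iff₀ hApos, zero_mul]
  constructor
  · intro h
    by_contra hcon
    push_neg at hcon
    nlinarith [mul_nonneg (sub_pos.mpr hpq).le (by linarith : (0:ℝ) ≤ 8 - 3*p - q)]
  · intro h
    exact mul_pos (mul_pos (by linarith) (by linarith)) hq1
end

section
/- Let 1 < p < q < 5. Set α = (p-1)/2, β = (q-1)/2, c_1 = -\frac{5-p}{p+1}, c_2 = \frac{5-q}{q+1}, d_1 = -\frac{2}{p+1}, r_1 = c_1 + d_1(q-p). Let s_0 > 0 satisfy s_0^{β-α} = -c_1/c_2 and t_1 > 0 satisfy t_1^{β-α} = -r_1 α/(c_2 β). Then s_0 ≤ t_1 if and only if p ≥ 7/3. -/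
theorem stmt_4 (p q : ℝ) (hp : 1 < p) (hpq : p < q) (hq : q < 5)
    (α β c₁ c₂ d₁ r₁ : ℝ)
    (hα : α = (p-1)/2) (hβ : β = (q-1)/2)
    (hc₁ : c₁ = -((5-p)/(p+1))) (hc₂ : c₂ = (5-q)/(q+1))
    (hd₁ : d₁ = -(2/(p+1))) (hr₁ : r₁ = c₁ + d₁*(q-p))
    (s₀ t₁ : ℝ) (hs₀ : 0 < s₀) (ht₁ : 0 < t₁)
    (hs : s₀ ^ (β - α) = -c₁ / c₂)
    (ht : t₁ ^ (β - α) = -(r₁ * α) / (c₂ * β)) :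
    s₀ ≤ t₁ ↔ p ≥ 7/3 := by
  have hz : 0 < β - α := by rw [hα, hβ]; linarith
  rw [← Real.rpow_le_rpow_iff hs₀.le ht₁.le hz, hs, ht]
  have hp1 : 0 < p + 1 := by linarith
  have hq1 : 0 < q + 1 := by linarith
  have hc₂' : 0 < c₂ := by rw [hc₂]; exact div_pos (by linarith) (by linarith)
  have hβ' : 0 < β := by rw [hβ]; linarith
  have hα' : 0 < α := by rw [hα]; linarith
  rw [div_le_div_iff₀ hc₂' (by positivity)]
  have e1 : -c₁ = (5-p)/(p+1) := by rw [hc₁]; ring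
  have e2 : -(r₁*α) = (5-3*p+2*q)/(p+1) * α := by
    rw [hr₁, hc₁, hd₁]; field_simp; ring
  rw [e1, e2]
  rw [hα, hβ]
  rw [div_mul_eq_mul_div, div_mul_eq_mul_div, div_mul_eq_mul_div,
    div_le_div_iff₀ hp1 hp1]
  constructor
  · intro h
    by_contra hcon
    push_neg at hcon
    nlinarith [mul_pos (mul_pos (mul_pos hc₂' hp1) (sub_pos.mpr hpq)) (show (0:ℝ) < 7 - 3*p by linarith)]
  · intro h
    nlinarith [mul_nonneg (mul_nonneg (mul_nonneg hc₂'.le hp1.le) (sub_pos.mpr hpq).le) (show (0:ℝ) ≤ 3*p - 7 by linarith)]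
end

section
/- Let 1 < p < q < 5. Set α = (p-1)/2, β = (q-1)/2, c_1 = -\frac{5-p}{p+1}, c_2 = \frac{5-q}{q+1}, d_1 = -\frac{2}{p+1}, r_2 = c_1 + 2 d_1(q-p). Let s_0 > 0 satisfy s_0^{β-α} = -c_1/c_2 and t_2 > 0 satisfy t_2^{β-α} = -r_2 α/(c_2 β). Then s_0 ≤ t_2 if and only if p ≥ 9/5. -/
theorem stmt_5 (p q : ℝ) (hp : 1 < p) (hpq : p < q) (hq : q < 5)
    (α β c₁ c₂ d₁ r₂ : ℝ)
    (hα : α = (p-1)/2) (hβ : β = (q-1)/2)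
    (hc₁ : c₁ = -((5-p)/(p+1))) (hc₂ : c₂ = (5-q)/(q+1))
    (hd₁ : d₁ = -(2/(p+1))) (hr₂ : r₂ = c₁ + 2*d₁*(q-p))
    (s₀ t₂ : ℝ) (hs₀ : 0 < s₀) (ht₂ : 0 < t₂)
    (hs : s₀ ^ (β - α) = -c₁ / c₂)
    (ht : t₂ ^ (β - α) = -(r₂ * α) / (c₂ * β)) :
    s₀ ≤ t₂ ↔ p ≥ 9/5 := by
  have hz : 0 < β - α := by rw [hα, hβ]; linarith
  have hp1 : (0:ℝ) < p + 1 := by linarith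
  have hq1 : (0:ℝ) < q + 1 := by linarith
  have h5q : (0:ℝ) < 5 - q := by linarith
  have hq1' : (0:ℝ) < q - 1 := by linarith
  have key : s₀ ≤ t₂ ↔ s₀ ^ (β - α) ≤ t₂ ^ (β - α) :=
    (Real.rpow_le_rpow_iff hs₀.le ht₂.le hz).symm
  rw [key, hs, ht]
  subst hα hβ hc₁ hc₂ hd₁ hr₂
  have hL : - -((5-p)/(p+1)) / ((5-q)/(q+1)) = ((5-p)*(q+1))/((p+1)*(5-q)) := by
    field_simp
  have hR : -((-((5-p)/(p+1)) + 2 * -(2/(p+1)) * (q-p)) * ((p-1)/2)) /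
      ((5-q)/(q+1) * ((q-1)/2)) =
      ((5+4*q-5*p)*(p-1)*(q+1))/((p+1)*(5-q)*(q-1)) := by
    field_simp; ring
  rw [hL, hR, div_le_div_iff₀ (by positivity) (by positivity)]
  constructor
  · intro h
    by_contra hlt
    push_neg at hlt
    have hM : (0:ℝ) < (p+1)*(q+1)*(5-q) := by positivity
    nlinarith [mul_pos hM (mul_pos (sub_pos.2 hpq) (by linarith : (0:ℝ) < 9 - 5*p))]
  · intro h
    have h2 : (q - p) * (9 - 5*p) ≤ 0 :=
      mul_nonpos_of_nonneg_of_nonpos (by linarith) (by linarith)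
    have hM : (0:ℝ) < (p+1)*(q+1)*(5-q) := by positivity
    nlinarith [mul_nonpos_of_nonneg_of_nonpos hM.le h2]
end

section
/- Let 0 < α < β < 2 with α ≥ 2/3. Then the improper integral ∫_0^1 \frac{-(2-α)(1-s^α) + (2-β)(1-s^β)}{(s^α - s^β)^{3/2}} ds diverges to -∞. -/
open MeasureTheory Filter

set_option maxHeartbeats 1000000 in
theorem stmt_7 (α β : ℝ) (hα : 0 < α) (hαβ : α < β) (hβ : β < 2) (hα' : 2/3 ≤ α) :
    Tendsto
      (fun a : ℝ => ∫ s in Set.Ioo a 1,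
        (-(2-α)*(1 - s ^ α) + (2-β)*(1 - s ^ β)) / (s ^ α - s ^ β) ^ ((3:ℝ)/2))
      (nhdsWithin 0 (Set.Ioi 0)) atBot := by
  set f : ℝ → ℝ := fun s =>
      (-(2-α)*(1 - s ^ α) + (2-β)*(1 - s ^ β)) / (s ^ α - s ^ β) ^ ((3:ℝ)/2) with hfdef
  have hα2 : α < 2 := hαβ.trans hβ
  have hβ0 : 0 < β := hα.trans hαβ
  have hγ : 0 < β - α := sub_pos.2 hαβ
  set c : ℝ := ((β - α)/4) ^ (α⁻¹) with hcdef
  have hx4 : 0 < (β - α)/4 := by linarith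
  have hc0 : 0 < c := Real.rpow_pos_of_pos hx4 _
  have hc1 : c < 1 := Real.rpow_lt_one hx4.le (by linarith) (by positivity)
  have hcα : c ^ α = (β - α)/4 := Real.rpow_inv_rpow hx4.le (ne_of_gt hα)
  set K : ℝ := (α - β)/2 with hKdef
  have hK : K < 0 := by rw [hKdef]; linarith
  -- positivity of denominator
  have hden_pos : ∀ s ∈ Set.Ioo (0:ℝ) 1, 0 < s ^ α - s ^ β := fun s hs =>
    sub_pos.2 (Real.rpow_lt_rpow_of_exponent_gt hs.1 hs.2 hαβ)
  -- continuity
  have hpow : ∀ γ : ℝ, ContinuousOn (fun s : ℝ => s ^ γ) (Set.Ioo (0:ℝ) 1) := fun γ =>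
    continuousOn_id.rpow_const (fun x hx => Or.inl (ne_of_gt hx.1))
  have hcont : ContinuousOn f (Set.Ioo 0 1) := by
    apply ContinuousOn.div
    · exact (continuousOn_const.mul (continuousOn_const.sub (hpow α))).add
        (continuousOn_const.mul (continuousOn_const.sub (hpow β)))
    · exact ((hpow α).sub (hpow β)).rpow_const
        (fun x hx => Or.inl (ne_of_gt (hden_pos x hx)))
    · exact fun x hx => ne_of_gt (Real.rpow_pos_of_pos (hden_pos x hx) _)
  -- pointwise bound near 0
  have hfle : ∀ s ∈ Set.Ioo (0:ℝ) c, f s ≤ K * s⁻¹ := by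
    rintro s ⟨hs0, hsc⟩
    have hs1 : s < 1 := hsc.trans hc1
    have hd : 0 < s ^ α - s ^ β := hden_pos s ⟨hs0, hs1⟩
    have hdp : 0 < (s ^ α - s ^ β) ^ ((3:ℝ)/2) := Real.rpow_pos_of_pos hd _
    have hXc : s ^ α ≤ (β - α)/4 := by
      rw [← hcα]; exact Real.rpow_le_rpow hs0.le hsc.le hα.le
    have hX0 : 0 ≤ s ^ α := Real.rpow_nonneg hs0.le _
    have hY0 : 0 ≤ s ^ β := Real.rpow_nonneg hs0.le _
    have hNle : -(2-α)*(1 - s ^ α) + (2-β)*(1 - s ^ β) ≤ K := by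
      rw [hKdef]
      nlinarith [mul_nonneg hα.le hX0, mul_nonneg (by linarith : (0:ℝ) ≤ 2 - β) hY0]
    have hD : (s ^ α - s ^ β) ^ ((3:ℝ)/2) ≤ s := by
      have e1 : s ^ α - s ^ β ≤ s ^ ((2:ℝ)/3) := by
        have := Real.rpow_le_rpow_of_exponent_ge hs0 hs1.le hα'
        linarith
      have e2 : (s ^ α - s ^ β) ^ ((3:ℝ)/2) ≤ (s ^ ((2:ℝ)/3)) ^ ((3:ℝ)/2) :=
        Real.rpow_le_rpow hd.le e1 (by norm_num)
      have e3 : (s ^ ((2:ℝ)/3)) ^ ((3:ℝ)/2) = s := by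
        rw [← Real.rpow_mul hs0.le, show (2:ℝ)/3*(3/2) = 1 by norm_num, Real.rpow_one]
      rw [e3] at e2; exact e2
    have key : (-(2-α)*(1 - s ^ α) + (2-β)*(1 - s ^ β)) / (s ^ α - s ^ β) ^ ((3:ℝ)/2)
        ≤ K / s := by
      rw [div_le_div_iff₀ hdp hs0]
      nlinarith [mul_le_mul_of_nonneg_right hNle hs0.le,
        mul_le_mul_of_nonpos_left hD hK.le]
    simpa [hfdef, div_eq_mul_inv] using key
  -- pointwise abs bound near 1
  set M : ℝ := ((β - α) * c ^ β) ^ ((3:ℝ)/2) with hMdef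
  have hM0 : 0 < M := Real.rpow_pos_of_pos (by positivity) _
  set C : ℝ := 8 / M with hCdef
  have habs : ∀ s ∈ Set.Ioo c 1, |f s| ≤ C * (1 - s) ^ (-(1:ℝ)/2) := by
    rintro s ⟨hcs, hs1⟩
    have hs0 : 0 < s := hc0.trans hcs
    have h1s : 0 < 1 - s := by linarith
    have hd : 0 < s ^ α - s ^ β := hden_pos s ⟨hs0, hs1⟩
    have hdp : 0 < (s ^ α - s ^ β) ^ ((3:ℝ)/2) := Real.rpow_pos_of_pos hd _
    have hs2 : s * s ≤ s ^ α := by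
      have := Real.rpow_le_rpow_of_exponent_ge hs0 hs1.le hα2.le
      rwa [show ((2:ℝ) = ((2:ℕ):ℝ)) by norm_num, Real.rpow_natCast, sq] at this
    have hs2' : s * s ≤ s ^ β := by
      have := Real.rpow_le_rpow_of_exponent_ge hs0 hs1.le hβ.le
      rwa [show ((2:ℝ) = ((2:ℕ):ℝ)) by norm_num, Real.rpow_natCast, sq] at this
    have hX1 : s ^ α ≤ 1 := Real.rpow_le_one hs0.le hs1.le hα.le
    have hY1 : s ^ β ≤ 1 := Real.rpow_le_one hs0.le hs1.le hβ0.le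
    have hXub : 1 - s ^ α ≤ 2 * (1 - s) := by nlinarith
    have hYub : 1 - s ^ β ≤ 2 * (1 - s) := by nlinarith
    have hNabs : |(-(2-α)*(1 - s ^ α) + (2-β)*(1 - s ^ β))| ≤ 8 * (1 - s) := by
      have hA0 : 0 ≤ (2-α) * (1 - s ^ α) := mul_nonneg (by linarith) (by linarith)
      have hB0 : 0 ≤ (2-β) * (1 - s ^ β) := mul_nonneg (by linarith) (by linarith)
      have hA2 : (2-α) * (1 - s ^ α) ≤ 2 * (2 * (1 - s)) :=
        mul_le_mul (by linarith) hXub (by linarith) (by norm_num)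
      have hB2 : (2-β) * (1 - s ^ β) ≤ 2 * (2 * (1 - s)) :=
        mul_le_mul (by linarith) hYub (by linarith) (by norm_num)
      rw [abs_le]; constructor <;> nlinarith
    -- lower bound on denominator
    have hden_lb : (β - α) * c ^ β * (1 - s) ≤ s ^ α - s ^ β := by
      set t : ℝ := s ^ (β - α) with htdef
      have ht0 : 0 < t := Real.rpow_pos_of_pos hs0 _
      have hsplit : s ^ β = s ^ α * t := by
        rw [htdef, ← Real.rpow_add hs0]; ring_nf
      have hlogt : Real.log t = (β - α) * Real.log s := Real.log_rpow hs0 _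
      have h7 : t * (-Real.log t) ≤ 1 - t := by
        have h := Real.log_le_sub_one_of_pos (inv_pos.2 ht0)
        rw [Real.log_inv] at h
        have := mul_le_mul_of_nonneg_left h ht0.le
        rw [mul_sub, mul_inv_cancel₀ (ne_of_gt ht0), mul_one] at this
        linarith [this]
      have h8 : 1 - s ≤ -Real.log s := by
        have := Real.log_le_sub_one_of_pos hs0; linarith
      have h9 : c ^ (β - α) ≤ t := Real.rpow_le_rpow hc0.le hcs.le hγ.le
      have hcab : 0 < c ^ (β - α) := Real.rpow_pos_of_pos hc0 _
      have h10 : c ^ (β - α) * ((β - α) * (1 - s)) ≤ t * ((β - α) * (-Real.log s)) := by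
        apply mul_le_mul h9 (mul_le_mul_of_nonneg_left h8 hγ.le) (by positivity) ht0.le
      have h11 : c ^ (β - α) * ((β - α) * (1 - s)) ≤ 1 - t := by
        have : t * ((β - α) * (-Real.log s)) = t * (-Real.log t) := by
          rw [hlogt]; ring
        rw [this] at h10
        linarith
      have hsa : c ^ α ≤ s ^ α := Real.rpow_le_rpow hc0.le hcs.le hα.le
      have hcβ : c ^ α * c ^ (β - α) = c ^ β := by
        rw [← Real.rpow_add hc0]; ring_nf
      have ht1 : t ≤ 1 := Real.rpow_le_one hs0.le hs1.le hγ.le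
      have hca0 : 0 < c ^ α := Real.rpow_pos_of_pos hc0 _
      calc (β - α) * c ^ β * (1 - s) = c ^ α * (c ^ (β - α) * ((β - α) * (1 - s))) := by
            rw [← hcβ]; ring
        _ ≤ c ^ α * (1 - t) := by
            apply mul_le_mul_of_nonneg_left h11 hca0.le
        _ ≤ s ^ α * (1 - t) := by
            apply mul_le_mul_of_nonneg_right hsa (by linarith)
        _ = s ^ α - s ^ β := by rw [hsplit]; ring
    have hdp_lb : M * (1 - s) ^ ((3:ℝ)/2) ≤ (s ^ α - s ^ β) ^ ((3:ℝ)/2) := by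
      have := Real.rpow_le_rpow (by positivity : (0:ℝ) ≤ (β - α) * c ^ β * (1 - s))
        hden_lb (by norm_num : (0:ℝ) ≤ 3/2)
      rwa [Real.mul_rpow (by positivity) h1s.le] at this
    have hM1s : 0 < M * (1 - s) ^ ((3:ℝ)/2) := by positivity
    have hrw : (8:ℝ) * (1 - s) / (M * (1 - s) ^ ((3:ℝ)/2)) = C * (1 - s) ^ (-(1:ℝ)/2) := by
      have hne : (1 - s) ^ ((3:ℝ)/2) ≠ 0 := ne_of_gt (Real.rpow_pos_of_pos h1s _)
      have hid : (1 - s) ^ (-(1:ℝ)/2) * (1 - s) ^ ((3:ℝ)/2) = 1 - s := by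
        rw [← Real.rpow_add h1s]; norm_num
      have hCM : C * M = 8 := by rw [hCdef]; field_simp
      have key : C * (1 - s) ^ (-(1:ℝ)/2) * (M * (1 - s) ^ ((3:ℝ)/2)) = 8 * (1 - s) := by
        calc C * (1 - s) ^ (-(1:ℝ)/2) * (M * (1 - s) ^ ((3:ℝ)/2))
            = (C * M) * ((1 - s) ^ (-(1:ℝ)/2) * (1 - s) ^ ((3:ℝ)/2)) := by ring
          _ = 8 * (1 - s) := by rw [hCM, hid]
      rw [eq_comm, eq_div_iff (ne_of_gt hM1s)]
      exact key
    calc |f s| = |(-(2-α)*(1 - s ^ α) + (2-β)*(1 - s ^ β))| / (s ^ α - s ^ β) ^ ((3:ℝ)/2) := by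
          rw [hfdef, abs_div, abs_of_pos hdp]
      _ ≤ 8 * (1 - s) / (M * (1 - s) ^ ((3:ℝ)/2)) :=
          div_le_div₀ (by positivity) hNabs hM1s hdp_lb
      _ = C * (1 - s) ^ (-(1:ℝ)/2) := hrw
  -- integrability on (c, 1)
  have hg_int : IntegrableOn (fun s : ℝ => C * (1 - s) ^ (-(1:ℝ)/2)) (Set.Ioo c 1) := by
    have h1 : IntervalIntegrable (fun x : ℝ => x ^ (-(1:ℝ)/2)) volume 0 (1 - c) :=
      intervalIntegral.intervalIntegrable_rpow' (by norm_num)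
    have h2 := (h1.comp_sub_left 1).const_mul C
    simp only [sub_sub_cancel, sub_zero] at h2
    exact (h2.2).mono_set Set.Ioo_subset_Ioc_self
  have hf_meas : AEStronglyMeasurable f (volume.restrict (Set.Ioo c 1)) :=
    (hcont.mono (Set.Ioo_subset_Ioo hc0.le le_rfl)).aestronglyMeasurable measurableSet_Ioo
  have hf_int1 : IntegrableOn f (Set.Ioo c 1) := by
    apply Integrable.mono' hg_int hf_meas
    exact (ae_restrict_iff' measurableSet_Ioo).2 (ae_of_all _ fun s hs => by
      simpa [Real.norm_eq_abs] using habs s hs)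
  have hf_intIoc1 : IntegrableOn f (Set.Ioc c 1) :=
    (integrableOn_Ioc_iff_integrableOn_Ioo).2 hf_int1
  set B : ℝ := ∫ s in Set.Ioc c 1, f s with hBdef
  -- the main bound
  have hbound : ∀ a ∈ Set.Ioo (0:ℝ) c,
      (∫ s in Set.Ioo a 1, f s) ≤ K * (Real.log c - Real.log a) + B := by
    rintro a ⟨ha0, hac⟩
    have hsub : Set.Icc a c ⊆ Set.Ioo (0:ℝ) 1 := fun x hx =>
      ⟨lt_of_lt_of_le ha0 hx.1, lt_of_le_of_lt hx.2 hc1⟩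
    have hf_intac : IntegrableOn f (Set.Ioc a c) :=
      ((hcont.mono hsub).integrableOn_Icc).mono_set Set.Ioc_subset_Icc_self
    have hK_int : IntegrableOn (fun s : ℝ => K * s⁻¹) (Set.Ioo a c) := by
      have : ContinuousOn (fun s : ℝ => K * s⁻¹) (Set.Icc a c) :=
        continuousOn_const.mul (continuousOn_id.inv₀ fun x hx =>
          ne_of_gt (lt_of_lt_of_le ha0 hx.1))
      exact this.integrableOn_Icc.mono_set Set.Ioo_subset_Icc_self
    have hsplit : (∫ s in Set.Ioo a 1, f s)
        = (∫ s in Set.Ioc a c, f s) + ∫ s in Set.Ioc c 1, f s := by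
      rw [← MeasureTheory.integral_Ioc_eq_integral_Ioo,
        ← Set.Ioc_union_Ioc_eq_Ioc hac.le hc1.le,
        MeasureTheory.setIntegral_union (Set.Ioc_disjoint_Ioc_of_le le_rfl) measurableSet_Ioc
          hf_intac hf_intIoc1]
    have hmono : (∫ s in Set.Ioc a c, f s) ≤ ∫ s in Set.Ioo a c, K * s⁻¹ := by
      rw [MeasureTheory.integral_Ioc_eq_integral_Ioo]
      apply MeasureTheory.setIntegral_mono_on
        (hf_intac.mono_set Set.Ioo_subset_Ioc_self) hK_int measurableSet_Ioo
      exact fun x hx => hfle x ⟨ha0.trans hx.1, hx.2⟩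
    have hcomp : (∫ s in Set.Ioo a c, K * s⁻¹) = K * (Real.log c - Real.log a) := by
      rw [← MeasureTheory.integral_Ioc_eq_integral_Ioo,
        ← intervalIntegral.integral_of_le hac.le,
        intervalIntegral.integral_const_mul, integral_inv_of_pos ha0 hc0,
        Real.log_div (ne_of_gt hc0) (ne_of_gt ha0)]
    rw [hsplit, ← hBdef]
    have := hmono.trans_eq hcomp
    linarith
  -- conclusion
  have hGlim : Tendsto (fun a : ℝ => K * (Real.log c - Real.log a) + B)
      (nhdsWithin 0 (Set.Ioi 0)) atBot := by
    have h1 : Tendsto (fun a : ℝ => (-K) * Real.log a) (nhdsWithin 0 (Set.Ioi 0)) atBot :=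
      Real.tendsto_log_nhdsGT_zero.const_mul_atBot (by linarith)
    have h2 := tendsto_atBot_add_const_right _ (K * Real.log c + B) h1
    exact h2.congr fun a => by ring
  refine tendsto_atBot_mono' _ ?_ hGlim
  filter_upwards [Ioo_mem_nhdsGT_of_mem (by exact ⟨le_refl 0, hc0⟩ : (0:ℝ) ∈ Set.Ico 0 c)]
    with a ha using hbound a ha
end

section
/- Let a, b, c be real numbers with c > 0, c not a nonpositive integer, and c > a + b. Then the hypergeometric series F(a,b,c;1) = \sum_{n=0}^{∞} \frac{(a)_n (b)_n}{(c)_n n!} converges absolutely, and the identity (a + b - c) F(a,b,c;1) + (c - a) F(a-1,b,c;1) = 0 holds. -/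
open Filter Polynomial Topology



lemma aux_tendsto (u v c p : ℝ) :
    Tendsto (fun n : ℕ => (n:ℝ) * ((c+n)*((n:ℝ)+1)/((u+n)*(v+n)) - (1+1/(n:ℝ))^p))
      atTop (𝓝 (c+1-u-v-p)) := by
  have hA : Tendsto (fun n : ℕ => (n:ℝ) * ((c+n)*((n:ℝ)+1)/((u+n)*(v+n)) - 1))
      atTop (𝓝 (c+1-u-v)) := by
    have hcont : ContinuousAt (fun x : ℝ => ((c+1-u-v) + (c-u*v)*x)/((u*x+1)*(v*x+1))) 0 := by
      apply ContinuousAt.div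
      · fun_prop
      · fun_prop
      · norm_num
    have hcomp := hcont.tendsto.comp tendsto_one_div_atTop_nhds_zero_nat
    simp only [Function.comp_def] at hcomp
    norm_num at hcomp
    apply hcomp.congr'
    filter_upwards [eventually_gt_atTop ⌈|u|+|v|⌉₊, eventually_gt_atTop 0] with n hn hn0
    have hn' : |u| + |v| < (n:ℝ) := lt_of_le_of_lt (Nat.le_ceil _) (by exact_mod_cast hn)
    have hnpos : (0:ℝ) < n := by exact_mod_cast hn0
    have hu : (0:ℝ) < u + n := by
      have := neg_abs_le u; have := abs_nonneg v; linarith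
    have hv : (0:ℝ) < v + n := by
      have := neg_abs_le v; have := abs_nonneg u; linarith
    field_simp
    ring
  have hB : Tendsto (fun n : ℕ => (n:ℝ) * ((1+1/(n:ℝ))^p - 1)) atTop (𝓝 p) := by
    have hd1 : HasDerivAt (fun x : ℝ => (1+x)^p) (p * (1:ℝ)^(p-1) * 1) 0 := by
      have h0 : HasDerivAt (fun x : ℝ => 1+x) 1 0 := by
        simpa using (hasDerivAt_id (0:ℝ)).const_add 1
      have h1 : HasDerivAt (fun y : ℝ => y^p) (p * (1:ℝ)^(p-1)) ((fun x:ℝ => 1+x) 0) := by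
        simpa using Real.hasDerivAt_rpow_const (x := (1:ℝ)) (p := p) (Or.inl one_ne_zero)
      exact h1.comp 0 h0
    simp only [Real.one_rpow, mul_one] at hd1
    have hslope := hasDerivAt_iff_tendsto_slope.mp hd1
    have hmap : Tendsto (fun n : ℕ => 1/(n:ℝ)) atTop (𝓝[≠] (0:ℝ)) := by
      apply tendsto_nhdsWithin_of_tendsto_nhds_of_eventually_within _
        tendsto_one_div_atTop_nhds_zero_nat
      filter_upwards [eventually_gt_atTop 0] with n hn
      have : (0:ℝ) < n := by exact_mod_cast hn
      simp [Set.mem_compl, ne_eq, one_div]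
      positivity
    have hcomp := hslope.comp hmap
    simp only [Function.comp_def] at hcomp
    apply hcomp.congr'
    filter_upwards [eventually_gt_atTop 0] with n hn
    have hnpos : (0:ℝ) < n := by exact_mod_cast hn
    rw [slope_def_field]
    field_simp
    ring_nf
    rw [Real.one_rpow]
    ring
  have := hA.sub hB
  simp only [mul_sub] at this ⊢
  convert this using 2 with n
  ring



lemma aux_decay (u v c : ℝ) (p : ℝ) (hp : p + u + v < c + 1)
    (g : ℕ → ℝ)
    (hg : ∀ n : ℕ, g (n+1) * ((c + n) * ((n:ℝ) + 1)) = g n * ((u + n) * (v + n))) :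
    ∃ C : ℝ, 0 ≤ C ∧ ∀ n : ℕ, 1 ≤ n → |g n| ≤ C * ((n:ℝ) ^ p)⁻¹ := by
  have hε : 0 < c + 1 - u - v - p := by linarith
  have hev := (aux_tendsto u v c p).eventually (lt_mem_nhds hε)
  -- choose N
  obtain ⟨N, hN⟩ := (hev.and (hev.and ((eventually_gt_atTop ⌈|u|+|v|+|c|⌉₊).and
    (eventually_gt_atTop 0)))).exists_forall_of_atTop
  -- basic positivity for n ≥ N
  have hfacts : ∀ n : ℕ, N ≤ n → (0:ℝ) < u + n ∧ (0:ℝ) < v + n ∧ (0:ℝ) < c + n ∧ (0:ℝ) < n ∧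
      (1+1/(n:ℝ))^p * ((u+n)*(v+n)) ≤ (c+n)*((n:ℝ)+1) := by
    intro n hn
    obtain ⟨h1, _, h3, h4⟩ := hN n hn
    have hnR : |u| + |v| + |c| < (n:ℝ) := lt_of_le_of_lt (Nat.le_ceil _) (by exact_mod_cast h3)
    have hnpos : (0:ℝ) < n := by exact_mod_cast h4
    have hu : (0:ℝ) < u + n := by
      have := neg_abs_le u; have := abs_nonneg v; have := abs_nonneg c; linarith
    have hv : (0:ℝ) < v + n := by
      have := neg_abs_le v; have := abs_nonneg u; have := abs_nonneg c; linarith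
    have hcn : (0:ℝ) < c + n := by
      have := neg_abs_le c; have := abs_nonneg u; have := abs_nonneg v; linarith
    refine ⟨hu, hv, hcn, hnpos, ?_⟩
    have h5 : (1+1/(n:ℝ))^p < (c+n)*((n:ℝ)+1)/((u+n)*(v+n)) := by
      by_contra hcon
      push_neg at hcon
      have : (n:ℝ) * ((c+n)*((n:ℝ)+1)/((u+n)*(v+n)) - (1+1/(n:ℝ))^p) ≤ 0 := by
        apply mul_nonpos_of_nonneg_of_nonpos hnpos.le
        linarith
      linarith
    calc (1+1/(n:ℝ))^p * ((u+n)*(v+n))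
        ≤ ((c+n)*((n:ℝ)+1)/((u+n)*(v+n))) * ((u+n)*(v+n)) := by
          apply mul_le_mul_of_nonneg_right h5.le (by positivity)
      _ = (c+n)*((n:ℝ)+1) := by field_simp
  -- step inequality
  have hstep : ∀ n : ℕ, N ≤ n → ((n:ℝ)+1)^p * |g (n+1)| ≤ (n:ℝ)^p * |g n| := by
    intro n hn
    obtain ⟨hu, hv, hcn, hnpos, hkey⟩ := hfacts n hn
    have habs : |g (n+1)| * ((c+n)*((n:ℝ)+1)) = |g n| * ((u+n)*(v+n)) := by
      have h : |g (n+1)| * |(c+n)*((n:ℝ)+1)| = |g n| * |(u+n)*(v+n)| := by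
        rw [← abs_mul, ← abs_mul, hg n]
      rwa [abs_of_pos (by positivity : (0:ℝ) < (c+n)*((n:ℝ)+1)),
        abs_of_pos (by positivity : (0:ℝ) < (u+n)*(v+n))] at h
    have hsplit : ((n:ℝ)+1)^p = (n:ℝ)^p * (1+1/(n:ℝ))^p := by
      rw [← Real.mul_rpow hnpos.le (by positivity)]
      congr 1
      field_simp
    rw [hsplit]
    rcases eq_or_ne (g n) 0 with h0 | h0
    · have : |g (n+1)| = 0 := by
        have h1 : |g (n+1)| * ((c+n)*((n:ℝ)+1)) = 0 := by rw [habs, h0]; simp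
        have h2 : (0:ℝ) < (c+n)*((n:ℝ)+1) := by positivity
        exact (mul_eq_zero.mp h1).resolve_right h2.ne'
      rw [this, h0]
      simp
    · have hgn1 : |g (n+1)| = |g n| * ((u+n)*(v+n)) / ((c+n)*((n:ℝ)+1)) := by
        field_simp at habs ⊢
        linarith [habs]
      rw [hgn1, mul_assoc]
      apply mul_le_mul_of_nonneg_left _ (by positivity : (0:ℝ) ≤ (n:ℝ)^p)
      rw [mul_div_assoc', div_le_iff₀ (by positivity : (0:ℝ) < (c+n)*((n:ℝ)+1))]
      calc (1+1/(n:ℝ))^p * (|g n| * ((u+n)*(v+n)))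
          = |g n| * ((1+1/(n:ℝ))^p * ((u+n)*(v+n))) := by ring
        _ ≤ |g n| * ((c+n)*((n:ℝ)+1)) := mul_le_mul_of_nonneg_left hkey (abs_nonneg _)
  -- from hstep, get the bound
  have hmono : ∀ n : ℕ, N ≤ n → (n:ℝ)^p * |g n| ≤ (N:ℝ)^p * |g N| := by
    intro n hn
    induction n with
    | zero => simp_all
    | succ m ih =>
      rcases Nat.lt_or_ge N (m+1) with h | h
      · have hm : N ≤ m := Nat.lt_succ_iff.mp h
        calc ((m+1:ℕ):ℝ)^p * |g (m+1)| = ((m:ℝ)+1)^p * |g (m+1)| := by push_cast; ring_nf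
          _ ≤ (m:ℝ)^p * |g m| := hstep m hm
          _ ≤ (N:ℝ)^p * |g N| := ih hm
      · have : N = m+1 := le_antisymm hn h
        subst this
        exact le_rfl
  set C : ℝ := ∑ k ∈ Finset.range (N+1), (k:ℝ)^p * |g k| with hC
  have hterm : ∀ k : ℕ, 0 ≤ (k:ℝ)^p * |g k| := fun k => by positivity
  have hCnn : 0 ≤ C := Finset.sum_nonneg fun k _ => hterm k
  have hbound : ∀ n : ℕ, 1 ≤ n → (n:ℝ)^p * |g n| ≤ C := by
    intro n hn1
    rcases Nat.lt_or_ge n (N+1) with h | h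
    · exact Finset.single_le_sum (fun k _ => hterm k) (Finset.mem_range.mpr h)
    · calc (n:ℝ)^p * |g n| ≤ (N:ℝ)^p * |g N| := hmono n (Nat.le_of_succ_le h)
        _ ≤ C := Finset.single_le_sum (fun k _ => hterm k)
            (Finset.mem_range.mpr (Nat.lt_succ_self N))
  refine ⟨C, hCnn, fun n hn1 => ?_⟩
  have hnp : (0:ℝ) < (n:ℝ)^p := by
    have : (0:ℝ) < (n:ℝ) := by exact_mod_cast hn1
    positivity
  calc |g n| = ((n:ℝ)^p * |g n|) * ((n:ℝ)^p)⁻¹ := by field_simp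
    _ ≤ C * ((n:ℝ)^p)⁻¹ := mul_le_mul_of_nonneg_right (hbound n hn1) (by positivity)



lemma aux_summable (u v c : ℝ) (p : ℝ) (hp1 : 1 < p) (hp : p + u + v < c + 1)
    (g : ℕ → ℝ)
    (hg : ∀ n : ℕ, g (n+1) * ((c + n) * ((n:ℝ) + 1)) = g n * ((u + n) * (v + n))) :
    Summable (fun n : ℕ => |g n|) := by
  obtain ⟨C, hC0, hC⟩ := aux_decay u v c p hp g hg
  rw [← summable_nat_add_iff 1]
  apply Summable.of_nonneg_of_le (fun n => abs_nonneg _)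
    (fun n => hC (n+1) (Nat.le_add_left 1 n))
  have : Summable (fun n : ℕ => C * ((n:ℝ)^p)⁻¹) :=
    (Real.summable_nat_rpow_inv.mpr hp1).mul_left C
  have h2 := (summable_nat_add_iff 1).mpr this
  simpa using h2

lemma aux_tendsto_zero (u v c : ℝ) (p : ℝ) (hp0 : 0 < p) (hp : p + u + v < c + 1)
    (g : ℕ → ℝ)
    (hg : ∀ n : ℕ, g (n+1) * ((c + n) * ((n:ℝ) + 1)) = g n * ((u + n) * (v + n))) :
    Tendsto g atTop (𝓝 0) := by
  obtain ⟨C, hC0, hC⟩ := aux_decay u v c p hp g hg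
  have habs : Tendsto (fun n : ℕ => |g n|) atTop (𝓝 0) := ?_
  · exact tendsto_zero_iff_abs_tendsto_zero g |>.mpr (by simpa [Function.comp_def] using habs)
  have hlim : Tendsto (fun n : ℕ => C * ((n:ℝ)^p)⁻¹) atTop (𝓝 0) := by
    have h1 : Tendsto (fun n : ℕ => ((n:ℝ)^p)) atTop atTop :=
      (tendsto_rpow_atTop hp0).comp tendsto_natCast_atTop_atTop
    simpa using h1.inv_tendsto_atTop.const_mul C
  apply squeeze_zero' (Eventually.of_forall fun n => abs_nonneg _) _ hlim
  filter_upwards [eventually_ge_atTop 1] with n hn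
  exact hC n hn



lemma aux_succ_left_eval (x : ℝ) (n : ℕ) :
    (ascPochhammer ℝ (n+1)).eval x = x * (ascPochhammer ℝ n).eval (x+1) := by
  rw [ascPochhammer_succ_left]
  simp [eval_comp]

theorem stmt_9 (a b c : ℝ) (hc : 0 < c) (hc' : ∀ n : ℕ, c ≠ -(n : ℝ))
    (hcab : a + b < c) :
    Summable (fun n : ℕ =>
      |(ascPochhammer ℝ n).eval a * (ascPochhammer ℝ n).eval b /
        ((ascPochhammer ℝ n).eval c * n.factorial)|) ∧
    Summable (fun n : ℕ =>
      |(ascPochhammer ℝ n).eval (a-1) * (ascPochhammer ℝ n).eval b /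
        ((ascPochhammer ℝ n).eval c * n.factorial)|) ∧
    (a + b - c) * (∑' n : ℕ, (ascPochhammer ℝ n).eval a * (ascPochhammer ℝ n).eval b /
        ((ascPochhammer ℝ n).eval c * n.factorial))
      + (c - a) * (∑' n : ℕ, (ascPochhammer ℝ n).eval (a-1) * (ascPochhammer ℝ n).eval b /
        ((ascPochhammer ℝ n).eval c * n.factorial)) = 0 := by
  set t : ℕ → ℝ := fun n => (ascPochhammer ℝ n).eval a * (ascPochhammer ℝ n).eval b /
      ((ascPochhammer ℝ n).eval c * n.factorial) with ht_def
  set s : ℕ → ℝ := fun n => (ascPochhammer ℝ n).eval (a-1) * (ascPochhammer ℝ n).eval b /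
      ((ascPochhammer ℝ n).eval c * n.factorial) with hs_def
  set w : ℕ → ℝ := fun n => (ascPochhammer ℝ n).eval a * (ascPochhammer ℝ (n+1)).eval b /
      ((ascPochhammer ℝ n).eval c * n.factorial) with hw_def
  have hCpos : ∀ n : ℕ, 0 < (ascPochhammer ℝ n).eval c := fun n => ascPochhammer_pos n c hc
  have hfac : ∀ n : ℕ, (0:ℝ) < (n.factorial : ℝ) := fun n => by
    exact_mod_cast n.factorial_pos
  have hcn : ∀ n : ℕ, (0:ℝ) < c + n := fun n => by positivity
  -- the ratio recurrences
  have hgt : ∀ n : ℕ, t (n+1) * ((c + n) * ((n:ℝ) + 1)) = t n * ((a + n) * (b + n)) := by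
    intro n
    have h1 := (hCpos n).ne'
    have h2 := (hfac n).ne'
    have h3 := (hcn n).ne'
    simp only [ht_def, ascPochhammer_succ_eval, Nat.factorial_succ, Nat.cast_mul, Nat.cast_add,
      Nat.cast_one]
    field_simp
  have hgs : ∀ n : ℕ, s (n+1) * ((c + n) * ((n:ℝ) + 1)) = s n * (((a-1) + n) * (b + n)) := by
    intro n
    have h1 := (hCpos n).ne'
    have h2 := (hfac n).ne'
    have h3 := (hcn n).ne'
    simp only [hs_def, ascPochhammer_succ_eval, Nat.factorial_succ, Nat.cast_mul, Nat.cast_add,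
      Nat.cast_one]
    field_simp
  have hgw : ∀ n : ℕ, w (n+1) * ((c + n) * ((n:ℝ) + 1)) = w n * ((a + n) * ((b+1) + n)) := by
    intro n
    have h1 := (hCpos n).ne'
    have h2 := (hfac n).ne'
    have h3 := (hcn n).ne'
    simp only [hw_def, ascPochhammer_succ_eval, Nat.factorial_succ, Nat.cast_mul, Nat.cast_add,
      Nat.cast_one]
    field_simp
    ring
  set δ : ℝ := c - a - b with hδ
  have hδpos : 0 < δ := by simp [hδ]; linarith
  -- summability
  have hsum_t : Summable (fun n : ℕ => |t n|) :=
    aux_summable a b c (1 + δ/2) (by linarith) (by simp [hδ]; linarith) t hgt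
  have hsum_s : Summable (fun n : ℕ => |s n|) :=
    aux_summable (a-1) b c (1 + δ/2) (by linarith) (by simp [hδ]; linarith) s hgs
  have hw0 : Tendsto w atTop (𝓝 0) :=
    aux_tendsto_zero a (b+1) c (δ/2) (by linarith) (by simp [hδ]; linarith) w hgw
  refine ⟨hsum_t, hsum_s, ?_⟩
  -- telescoping identity
  have key : ∀ n : ℕ, ∑ k ∈ Finset.range (n+1), ((a+b-c) * t k + (c-a) * s k) = w n := by
    intro n
    induction n with
    | zero =>
      simp only [Finset.range_one, Finset.sum_singleton, ht_def, hs_def, hw_def]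
      simp [ascPochhammer_succ_eval]
    | succ m ih =>
      rw [Finset.sum_range_succ, ih]
      have h1 : (0:ℝ) < (ascPochhammer ℝ m).eval c := hCpos m
      have h2 : (0:ℝ) < (m.factorial : ℝ) := hfac m
      have h3 : (0:ℝ) < c + m := hcn m
      simp only [ht_def, hs_def, hw_def, ascPochhammer_succ_eval,
        aux_succ_left_eval (a-1) m, Nat.factorial_succ, Nat.cast_mul, Nat.cast_add, Nat.cast_one]
      have he : a - 1 + 1 = a := by ring
      rw [he]
      field_simp
      ring
  -- conclusion
  have hst : Summable t := hsum_t.of_abs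
  have hss : Summable s := hsum_s.of_abs
  have hd : Summable (fun n => (a+b-c) * t n + (c-a) * s n) :=
    (hst.mul_left _).add (hss.mul_left _)
  have hlim1 : Tendsto (fun n : ℕ => ∑ k ∈ Finset.range (n+1), ((a+b-c) * t k + (c-a) * s k))
      atTop (𝓝 (∑' n : ℕ, ((a+b-c) * t n + (c-a) * s n))) :=
    hd.hasSum.tendsto_sum_nat.comp (tendsto_add_atTop_nat 1)
  have hlim2 : Tendsto (fun n : ℕ => ∑ k ∈ Finset.range (n+1), ((a+b-c) * t k + (c-a) * s k))
      atTop (𝓝 0) := by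
    apply hw0.congr
    intro n
    exact (key n).symm
  have htsum0 : (∑' n : ℕ, ((a+b-c) * t n + (c-a) * s n)) = 0 :=
    tendsto_nhds_unique hlim1 hlim2
  rw [Summable.tsum_add (hst.mul_left _) (hss.mul_left _), tsum_mul_left, tsum_mul_left] at htsum0
  exact htsum0
end

section
/- Let 1 < p < q < 5 with p < 7/3. Define α = (p-1)/2, β = (q-1)/2 and H(α,β) = ∫_0^1 \frac{-(2-α)(1-s^α) + (2-β)(1-s^β)}{(s^α - s^β)^{3/2}} ds. Then: H(α,β) < 0 if 2p + q > 7; H(α,β) = 0 if 2p + q = 7; and H(α,β) > 0 if 2p + q < 7. -/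
open MeasureTheory

open Set Filter Topology in
private lemma stmt11_Dpos (a b : ℝ) (hab : a < b) {s : ℝ} (hs0 : 0 < s) (hs1 : s < 1) :
    0 < s^a - s^b := by
  have := Real.rpow_lt_rpow_of_exponent_gt hs0 hs1 hab
  linarith

open Set Filter Topology in
private lemma Dlow1 (a b : ℝ) (ha : 0 < a) (hab : a < b) (hb : b < 2) {s : ℝ}
    (hs0 : 1/2 ≤ s) (hs1 : s < 1) : (b-a)/4 * (1-s) ≤ s^a - s^b := by
  have hs0' : (0:ℝ) < s := by linarith
  have h1 : s^a - s^b = s^b * (s^(a-b) - 1) := by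
    rw [mul_sub, mul_one, ← Real.rpow_add hs0']; ring_nf
  have h2 : (1:ℝ)/4 ≤ s^b := by
    have e : s^(2:ℝ) ≤ s^b := Real.rpow_le_rpow_of_exponent_ge hs0' hs1.le hb.le
    have e2 : s^(2:ℝ) = s*s := by
      rw [show (2:ℝ) = (2:ℕ) by norm_num, Real.rpow_natCast]; ring
    have e3 : (1/2:ℝ)*(1/2:ℝ) ≤ s*s := mul_le_mul hs0 hs0 (by norm_num) (by linarith)
    calc (1:ℝ)/4 ≤ s*s := by linarith
      _ = s^(2:ℝ) := e2.symm
      _ ≤ s^b := e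
  have h3 : (b-a) * (1-s) ≤ s^(a-b) - 1 := by
    have hlog : 1 - s ≤ -Real.log s := by
      have := Real.log_le_sub_one_of_pos hs0'
      linarith
    have hrw : s^(a-b) = Real.exp (Real.log s * (a-b)) := Real.rpow_def_of_pos hs0' _
    have hexp : Real.log s * (a-b) + 1 ≤ Real.exp (Real.log s * (a-b)) :=
      Real.add_one_le_exp _
    have : (b-a) * (1-s) ≤ Real.log s * (a-b) := by nlinarith
    rw [hrw]; linarith
  have hba : 0 < b - a := by linarith
  have hs1' : 0 ≤ 1 - s := by linarith
  calc (b-a)/4 * (1-s) = (1/4) * ((b-a)*(1-s)) := by ring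
    _ ≤ s^b * (s^(a-b) - 1) := by
        apply mul_le_mul h2 h3 (by nlinarith) (by positivity)
    _ = s^a - s^b := h1.symm

open Set Filter Topology in
private lemma rpow_tendsto_zero_aux11 {e : ℝ} (he : 0 < e) :
    Tendsto (fun x : ℝ => x ^ e) (𝓝[>] (0:ℝ)) (𝓝 0) := by
  have := (Real.continuousAt_rpow_const 0 e (Or.inr he.le)).tendsto
  rw [Real.zero_rpow he.ne'] at this
  exact this.mono_left nhdsWithin_le_nhds

open Set Filter Topology in
private lemma tendsto_F_zero (a b : ℝ) (ha : 0 < a) (hab : a < b) (ha' : a < 2/3) :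
    Tendsto (fun x : ℝ => 2*(x - x^(1-a)) * (x^a - x^b)^(-(1:ℝ)/2)) (𝓝[>] (0:ℝ)) (𝓝 0) := by
  have key : ∀ x ∈ Ioo (0:ℝ) 1, 2*(x^(1-a/2) - x^(1-3*a/2)) * (1 - x^(b-a))^(-(1:ℝ)/2)
      = 2*(x - x^(1-a)) * (x^a - x^b)^(-(1:ℝ)/2) := by
    intro x hx
    obtain ⟨hx0, hx1⟩ := hx
    have hxa : (0:ℝ) < x^a := Real.rpow_pos_of_pos hx0 _
    have hba : x^(b-a) < 1 := Real.rpow_lt_one hx0.le hx1 (by linarith)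
    have hfac : x^a - x^b = x^a * (1 - x^(b-a)) := by
      rw [mul_sub, mul_one, ← Real.rpow_add hx0]; ring_nf
    rw [hfac, Real.mul_rpow hxa.le (by linarith)]
    have e1 : x^(1-a/2) = x * (x^a)^(-(1:ℝ)/2) := by
      rw [← Real.rpow_mul hx0.le,
        show (1 - a/2) = 1 + a * (-(1:ℝ)/2) by ring, Real.rpow_add hx0, Real.rpow_one]
    have e2 : x^(1-3*a/2) = x^(1-a) * (x^a)^(-(1:ℝ)/2) := by
      rw [← Real.rpow_mul hx0.le, ← Real.rpow_add hx0]
      congr 1; ring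
    rw [e1, e2]; ring
  have h1 : Tendsto (fun x : ℝ => 2*(x^(1-a/2) - x^(1-3*a/2)) * (1 - x^(b-a))^(-(1:ℝ)/2))
      (𝓝[>] (0:ℝ)) (𝓝 0) := by
    have t1 := rpow_tendsto_zero_aux11 (by linarith : (0:ℝ) < 1-a/2)
    have t2 := rpow_tendsto_zero_aux11 (by linarith : (0:ℝ) < 1-3*a/2)
    have t3 : Tendsto (fun x : ℝ => (1 - x^(b-a))^(-(1:ℝ)/2)) (𝓝[>] (0:ℝ)) (𝓝 1) := by
      have tb := rpow_tendsto_zero_aux11 (by linarith : (0:ℝ) < b-a)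
      have tsub : Tendsto (fun x : ℝ => 1 - x^(b-a)) (𝓝[>] (0:ℝ)) (𝓝 1) := by
        simpa using (tendsto_const_nhds.sub tb)
      have hc : ContinuousAt (fun y : ℝ => y ^ (-(1:ℝ)/2)) 1 :=
        Real.continuousAt_rpow_const 1 _ (Or.inl one_ne_zero)
      have := hc.tendsto.comp tsub
      simpa [Real.one_rpow, Function.comp_def] using this
    have := (((t1.sub t2).const_mul 2).mul t3)
    simpa using this
  refine h1.congr' ?_
  filter_upwards [Ioo_mem_nhdsGT_of_mem (by norm_num : (0:ℝ) ∈ Ico (0:ℝ) 1)] with x hx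
  exact key x hx

open Set Filter Topology in
private lemma tendsto_F_one (a b : ℝ) (ha : 0 < a) (hab : a < b) (hb : b < 2) (ha' : a < 2/3) :
    Tendsto (fun x : ℝ => 2*(x - x^(1-a)) * (x^a - x^b)^(-(1:ℝ)/2)) (𝓝[<] (1:ℝ)) (𝓝 0) := by
  set K : ℝ := 2 / ((b-a)/4)^((1:ℝ)/2) with hK
  have hk : (0:ℝ) < (b-a)/4 := by linarith
  apply squeeze_zero_norm' (a := fun s : ℝ => K * (1-s)^((1:ℝ)/2))
  · filter_upwards [Ioo_mem_nhdsLT (by norm_num : (1/2 : ℝ) < 1)] with s hs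
    obtain ⟨hs0, hs1⟩ := hs
    have hs0' : (0:ℝ) < s := by linarith
    have hD : 0 < s ^ a - s ^ b := by
      have := Real.rpow_lt_rpow_of_exponent_gt hs0' hs1 hab
      linarith
    have h1s : 0 < 1 - s := by linarith
    -- numerator bound
    have hnum : |s - s^(1-a)| ≤ 1 - s := by
      have hge : s ≤ s^(1-a) := by
        have := Real.rpow_le_rpow_of_exponent_ge hs0' hs1.le (by linarith : 1-a ≤ 1)
        rwa [Real.rpow_one] at this
      have hle1 : s^(1-a) ≤ 1 := Real.rpow_le_one hs0'.le hs1.le (by linarith)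
      rw [abs_sub_comm, abs_of_nonneg (by linarith)]
      -- s^(1-a) - s ≤ 1 - s
      linarith
    -- denominator bound
    have hDlow := Dlow1 a b ha hab hb hs0.le hs1
    have hDpow : ((b-a)/4 * (1-s))^((1:ℝ)/2) ≤ (s^a - s^b)^((1:ℝ)/2) :=
      Real.rpow_le_rpow (by positivity) hDlow (by norm_num)
    have hDppos : (0:ℝ) < ((b-a)/4 * (1-s))^((1:ℝ)/2) := Real.rpow_pos_of_pos (by positivity) _
    have hDneg : (s^a - s^b)^(-(1:ℝ)/2) = ((s^a - s^b)^((1:ℝ)/2))⁻¹ := by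
      rw [neg_div, Real.rpow_neg hD.le]
    have hbound : (s^a - s^b)^(-(1:ℝ)/2) ≤ (((b-a)/4 * (1-s))^((1:ℝ)/2))⁻¹ := by
      rw [hDneg]
      exact inv_anti₀ hDppos hDpow
    have hmulpow : ((b-a)/4 * (1-s))^((1:ℝ)/2) = ((b-a)/4)^((1:ℝ)/2) * (1-s)^((1:ℝ)/2) :=
      Real.mul_rpow hk.le h1s.le
    have hDnegpos : (0:ℝ) < (s^a - s^b)^(-(1:ℝ)/2) := Real.rpow_pos_of_pos hD _
    have habs : ‖2*(s - s^(1-a)) * (s^a - s^b)^(-(1:ℝ)/2)‖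
        = 2 * |s - s^(1-a)| * (s^a - s^b)^(-(1:ℝ)/2) := by
      rw [Real.norm_eq_abs, abs_mul, abs_mul, abs_of_nonneg hDnegpos.le, abs_of_nonneg]
      norm_num
    rw [habs]
    have step1 : 2 * |s - s^(1-a)| * (s^a - s^b)^(-(1:ℝ)/2)
        ≤ 2 * (1-s) * (((b-a)/4)^((1:ℝ)/2) * (1-s)^((1:ℝ)/2))⁻¹ := by
      rw [← hmulpow]
      apply mul_le_mul (by nlinarith [abs_nonneg (s - s^(1-a))]) hbound hDnegpos.le
      positivity
    refine step1.trans ?_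
    have hhalf : (1-s) = (1-s)^((1:ℝ)/2) * (1-s)^((1:ℝ)/2) := by
      rw [← Real.rpow_add h1s]; norm_num
    have hpos1 : (0:ℝ) < (1-s)^((1:ℝ)/2) := Real.rpow_pos_of_pos h1s _
    have hpos2 : (0:ℝ) < ((b-a)/4)^((1:ℝ)/2) := Real.rpow_pos_of_pos hk _
    have hdiv : (1-s) * ((1-s)^((1:ℝ)/2))⁻¹ = (1-s)^((1:ℝ)/2) := by
      field_simp; linear_combination hhalf
    have heq : 2 * (1-s) * ((((b-a)/4)^((1:ℝ)/2) * (1-s)^((1:ℝ)/2))⁻¹)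
        = K * (1-s)^((1:ℝ)/2) := by
      have hQ : ((1-s)^((1:ℝ)/2)) ≠ 0 := hpos1.ne'
      have hP : (((b-a)/4)^((1:ℝ)/2)) ≠ 0 := hpos2.ne'
      rw [hK]
      field_simp
      linear_combination hhalf
    exact heq.le
  · have t1 : Tendsto (fun s : ℝ => 1 - s) (𝓝[<] (1:ℝ)) (𝓝[>] (0:ℝ)) := by
      apply tendsto_nhdsWithin_of_tendsto_nhds_of_eventually_within
      · have t0 := (continuous_sub_left (1:ℝ)).tendsto 1
        simp only [sub_self] at t0
        exact t0.mono_left nhdsWithin_le_nhds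
      · filter_upwards [self_mem_nhdsWithin] with s hs
        simp only [mem_Iio] at hs
        simp only [mem_Ioi]; linarith
    have := (rpow_tendsto_zero_aux11 (by norm_num : (0:ℝ) < 1/2)).comp t1
    have h2 := this.const_mul K
    simpa [Function.comp] using h2

open Set Filter Topology in
private lemma deriv_key (a b : ℝ) (ha : 0 < a) (hab : a < b) {s : ℝ} (hs0 : 0 < s) (hs1 : s < 1) :
    HasDerivAt (fun x : ℝ => 2*(x - x^(1-a)) * (x^a - x^b)^(-(1:ℝ)/2))
      ((-(2-a)*(1 - s ^ a) + (2-b)*(1 - s ^ b)) / (s ^ a - s ^ b) ^ ((3:ℝ)/2)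
        - (2-2*a-b) * (s^(-a) * (s^a - s^b)^(-(1:ℝ)/2))) s := by
  have hD : 0 < s ^ a - s ^ b := by
    have := Real.rpow_lt_rpow_of_exponent_gt hs0 hs1 hab
    linarith
  have h1 : HasDerivAt (fun x : ℝ => x^(1-a)) ((1-a) * s^(1-a-1)) s :=
    Real.hasDerivAt_rpow_const (Or.inl hs0.ne')
  have hu : HasDerivAt (fun x : ℝ => 2*(x - x^(1-a))) (2*(1 - (1-a) * s^(1-a-1))) s :=
    ((hasDerivAt_id s).sub h1).const_mul 2
  have hDa : HasDerivAt (fun x : ℝ => x^a) (a * s^(a-1)) s :=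
    Real.hasDerivAt_rpow_const (Or.inl hs0.ne')
  have hDb : HasDerivAt (fun x : ℝ => x^b) (b * s^(b-1)) s :=
    Real.hasDerivAt_rpow_const (Or.inl hs0.ne')
  have hD' : HasDerivAt (fun x : ℝ => x^a - x^b) (a * s^(a-1) - b * s^(b-1)) s := hDa.sub hDb
  have hv0 : HasDerivAt (fun y : ℝ => y^(-(1:ℝ)/2)) ((-(1:ℝ)/2) * (s^a - s^b)^(-(1:ℝ)/2-1)) (s^a - s^b) :=
    Real.hasDerivAt_rpow_const (Or.inl hD.ne')
  have hv : HasDerivAt (fun x : ℝ => (x^a - x^b)^(-(1:ℝ)/2))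
      (((-(1:ℝ)/2) * (s^a - s^b)^(-(1:ℝ)/2-1)) * (a * s^(a-1) - b * s^(b-1))) s := by have := hv0.comp s hD'; exact this
  have hF := hu.mul hv
  refine hF.congr_deriv (Eq.symm ?_)
  set S := (s^a - s^b)^((1:ℝ)/2) with hSdef
  have hSpos : 0 < S := Real.rpow_pos_of_pos hD _
  have hSS : S * S = s^a - s^b := by
    rw [hSdef, ← Real.rpow_add hD]; norm_num
  have hA : (0:ℝ) < s^a := Real.rpow_pos_of_pos hs0 _
  have e1 : (s^a - s^b)^(-(1:ℝ)/2) = S⁻¹ := by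
    rw [neg_div, Real.rpow_neg hD.le, hSdef]
  have e2 : (s^a - s^b)^(-(1:ℝ)/2-1) = (S * (s^a - s^b))⁻¹ := by
    have h : (-(1:ℝ)/2-1) = -((1:ℝ)/2+1) := by ring
    rw [h, Real.rpow_neg hD.le, Real.rpow_add hD, Real.rpow_one, hSdef]
  have e3 : (s^a - s^b)^((3:ℝ)/2) = S * (s^a - s^b) := by
    have h : ((3:ℝ)/2) = 1/2 + 1 := by norm_num
    rw [h, Real.rpow_add hD, Real.rpow_one, hSdef]
  have e4 : s^(1-a) = s / s^a := by rw [Real.rpow_sub hs0, Real.rpow_one]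
  have e5 : s^(1-a-1) = (s^a)⁻¹ := by
    have h : 1-a-1 = -a := by ring
    rw [h, Real.rpow_neg hs0.le]
  have e6 : s^(a-1) = s^a / s := by rw [Real.rpow_sub hs0, Real.rpow_one]
  have e7 : s^(b-1) = s^b / s := by rw [Real.rpow_sub hs0, Real.rpow_one]
  have e8 : s^(-a) = (s^a)⁻¹ := by rw [Real.rpow_neg hs0.le]
  rw [e1, e2, e3, e4, e5, e6, e7, e8]
  have hB : (0:ℝ) < s^b := Real.rpow_pos_of_pos hs0 _
  field_simp
  ring_nf

open Set Filter Topology in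
private lemma integrableOn_of_bounds (F : ℝ → ℝ) (C0 C1 r : ℝ) (hr : -1 < r)
    (hcont : ContinuousOn F (Ioo 0 1))
    (h0 : ∀ s ∈ Ioc (0:ℝ) (1/2), ‖F s‖ ≤ C0 * s ^ r)
    (h1 : ∀ s ∈ Ioo (1/2:ℝ) 1, ‖F s‖ ≤ C1 * (1-s) ^ (-(1:ℝ)/2)) :
    IntegrableOn F (Ioo (0:ℝ) 1) := by
  have hsub0 : Ioc (0:ℝ) (1/2) ⊆ Ioo (0:ℝ) 1 := fun x hx => ⟨hx.1, lt_of_le_of_lt hx.2 (by norm_num)⟩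
  have hsub1 : Ioo (1/2:ℝ) 1 ⊆ Ioo (0:ℝ) 1 := fun x hx => ⟨lt_trans (by norm_num) hx.1, hx.2⟩
  have hmaj0 : IntegrableOn (fun s : ℝ => C0 * s ^ r) (Ioc (0:ℝ) (1/2)) := by
    have := (intervalIntegral.intervalIntegrable_rpow' (a := 0) (b := 1/2) hr).const_mul C0
    exact (intervalIntegrable_iff_integrableOn_Ioc_of_le (by norm_num)).mp this
  have hmaj1 : IntegrableOn (fun s : ℝ => C1 * (1-s) ^ (-(1:ℝ)/2)) (Ioo (1/2:ℝ) 1) := by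
    have h := (intervalIntegral.intervalIntegrable_rpow' (a := 0) (b := 1/2) (by norm_num : (-1:ℝ) < -(1:ℝ)/2))
    have h2 := h.comp_sub_left 1
    rw [show (1:ℝ) - 1/2 = 1/2 by norm_num, show (1:ℝ) - 0 = 1 by norm_num] at h2
    have h3 := h2.const_mul C1
    exact ((intervalIntegrable_iff_integrableOn_Ioc_of_le (by norm_num)).mp h3.symm).mono_set
      Ioo_subset_Ioc_self
  have i0 : IntegrableOn F (Ioc (0:ℝ) (1/2)) := by
    apply Integrable.mono' hmaj0 ((hcont.mono hsub0).aestronglyMeasurable measurableSet_Ioc)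
    exact (ae_restrict_iff' measurableSet_Ioc).mpr (Filter.Eventually.of_forall h0)
  have i1 : IntegrableOn F (Ioo (1/2:ℝ) 1) := by
    apply Integrable.mono' hmaj1 ((hcont.mono hsub1).aestronglyMeasurable measurableSet_Ioo)
    exact (ae_restrict_iff' measurableSet_Ioo).mpr (Filter.Eventually.of_forall h1)
  refine (i0.union i1).mono_set ?_
  intro x hx
  rcases le_or_gt x (1/2) with h | h
  · exact Or.inl ⟨hx.1, h⟩
  · exact Or.inr ⟨h, hx.2⟩

open Set Filter Topology in
private lemma cont_f (a b : ℝ) (hab : a < b) :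
    ContinuousOn (fun s : ℝ => (-(2-a)*(1 - s ^ a) + (2-b)*(1 - s ^ b)) / (s ^ a - s ^ b) ^ ((3:ℝ)/2))
      (Ioo 0 1) := by
  have c1 : ContinuousOn (fun s : ℝ => s^a) (Ioo (0:ℝ) 1) := fun s hs =>
    (Real.continuousAt_rpow_const s a (Or.inl hs.1.ne')).continuousWithinAt
  have c2 : ContinuousOn (fun s : ℝ => s^b) (Ioo (0:ℝ) 1) := fun s hs =>
    (Real.continuousAt_rpow_const s b (Or.inl hs.1.ne')).continuousWithinAt
  apply ContinuousOn.div
  · exact (continuousOn_const.mul (continuousOn_const.sub c1)).add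
      (continuousOn_const.mul (continuousOn_const.sub c2))
  · exact (c1.sub c2).rpow_const fun s hs => Or.inl (stmt11_Dpos a b hab hs.1 hs.2).ne'
  · exact fun s hs => (Real.rpow_pos_of_pos (stmt11_Dpos a b hab hs.1 hs.2) _).ne'

open Set Filter Topology in
private lemma cont_G (a b : ℝ) (hab : a < b) :
    ContinuousOn (fun s : ℝ => s^(-a) * (s ^ a - s ^ b) ^ (-(1:ℝ)/2)) (Ioo 0 1) := by
  have c1 : ContinuousOn (fun s : ℝ => s^a) (Ioo (0:ℝ) 1) := fun s hs =>
    (Real.continuousAt_rpow_const s a (Or.inl hs.1.ne')).continuousWithinAt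
  have c2 : ContinuousOn (fun s : ℝ => s^b) (Ioo (0:ℝ) 1) := fun s hs =>
    (Real.continuousAt_rpow_const s b (Or.inl hs.1.ne')).continuousWithinAt
  have c3 : ContinuousOn (fun s : ℝ => s^(-a)) (Ioo (0:ℝ) 1) := fun s hs =>
    (Real.continuousAt_rpow_const s (-a) (Or.inl hs.1.ne')).continuousWithinAt
  exact c3.mul ((c1.sub c2).rpow_const fun s hs => Or.inl (stmt11_Dpos a b hab hs.1 hs.2).ne')

open Set Filter Topology in
private lemma bound0_f (a b : ℝ) (ha : 0 < a) (hab : a < b) (hb : b < 2) {s : ℝ}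
    (hs : s ∈ Ioc (0:ℝ) (1/2)) :
    ‖(-(2-a)*(1 - s ^ a) + (2-b)*(1 - s ^ b)) / (s ^ a - s ^ b) ^ ((3:ℝ)/2)‖
      ≤ (6 / (1 - (1/2:ℝ)^(b-a))^((3:ℝ)/2)) * s ^ (-(a*(3/2))) := by
  obtain ⟨hs0, hs2⟩ := hs
  have hs1 : s < 1 := lt_of_le_of_lt hs2 (by norm_num)
  set c0 : ℝ := 1 - (1/2:ℝ)^(b-a) with hc0def
  have hc0 : 0 < c0 := by
    have : (1/2:ℝ)^(b-a) < 1 := Real.rpow_lt_one (by norm_num) (by norm_num) (by linarith)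
    simp only [hc0def]; linarith
  have hsa : 0 < s^a := Real.rpow_pos_of_pos hs0 _
  have hD : 0 < s^a - s^b := stmt11_Dpos a b hab hs0 hs1
  have hDp : 0 < (s^a - s^b)^((3:ℝ)/2) := Real.rpow_pos_of_pos hD _
  have hfac : s^a - s^b = s^a * (1 - s^(b-a)) := by
    rw [mul_sub, mul_one, ← Real.rpow_add hs0]; ring_nf
  have hba : s^(b-a) ≤ (1/2:ℝ)^(b-a) := Real.rpow_le_rpow hs0.le hs2 (by linarith)
  have hDlow : s^a * c0 ≤ s^a - s^b := by
    rw [hfac]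
    apply mul_le_mul_of_nonneg_left _ hsa.le
    simp only [hc0def]; linarith
  have hDpow : (s^a * c0)^((3:ℝ)/2) ≤ (s^a - s^b)^((3:ℝ)/2) :=
    Real.rpow_le_rpow (by positivity) hDlow (by norm_num)
  have hsplit : (s^a * c0)^((3:ℝ)/2) = s^(a*(3/2)) * c0^((3:ℝ)/2) := by
    rw [Real.mul_rpow hsa.le hc0.le, ← Real.rpow_mul hs0.le]
  have hA1 : 0 ≤ 1 - s^a := by
    have := Real.rpow_le_one hs0.le hs1.le ha.le; linarith
  have hA2 : s^a ≥ 0 := hsa.le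
  have hB1 : 0 ≤ 1 - s^b := by
    have := Real.rpow_le_one hs0.le hs1.le (by linarith : 0 ≤ b); linarith
  have hB2 : s^b ≥ 0 := (Real.rpow_pos_of_pos hs0 _).le
  have hnum : |(-(2-a)*(1 - s ^ a) + (2-b)*(1 - s ^ b))| ≤ 6 := by
    rw [abs_le]; constructor <;> nlinarith
  rw [Real.norm_eq_abs, abs_div, abs_of_pos hDp]
  have step : |(-(2-a)*(1 - s ^ a) + (2-b)*(1 - s ^ b))| / (s^a - s^b)^((3:ℝ)/2)
      ≤ 6 / (s^(a*(3/2)) * c0^((3:ℝ)/2)) := by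
    apply div_le_div₀ (by norm_num) hnum
    · rw [← hsplit]; positivity
    · rw [← hsplit]; exact hDpow
  refine step.trans (le_of_eq ?_)
  rw [Real.rpow_neg hs0.le]
  have h1 : s^(a*(3/2)) ≠ 0 := by positivity
  have h2 : c0^((3:ℝ)/2) ≠ 0 := by positivity
  field_simp

open Set Filter Topology in
private lemma bound1_f (a b : ℝ) (ha : 0 < a) (hab : a < b) (hb : b < 2) (ha1 : a < 1) {s : ℝ}
    (hs : s ∈ Ioo (1/2:ℝ) 1) :
    ‖(-(2-a)*(1 - s ^ a) + (2-b)*(1 - s ^ b)) / (s ^ a - s ^ b) ^ ((3:ℝ)/2)‖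
      ≤ (6 * ((((b-a)/4))^((3:ℝ)/2))⁻¹) * (1-s) ^ (-(1:ℝ)/2) := by
  obtain ⟨hs2, hs1⟩ := hs
  have hs0 : (0:ℝ) < s := by linarith
  have h1s : (0:ℝ) < 1 - s := by linarith
  have hk : (0:ℝ) < (b-a)/4 := by linarith
  have hD : 0 < s^a - s^b := stmt11_Dpos a b hab hs0 hs1
  have hDp : 0 < (s^a - s^b)^((3:ℝ)/2) := Real.rpow_pos_of_pos hD _
  -- numerator bound
  have hA2 : s ≤ s^a := by
    have := Real.rpow_le_rpow_of_exponent_ge hs0 hs1.le ha1.le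
    rwa [Real.rpow_one] at this
  have hA1 : s^a ≤ 1 := Real.rpow_le_one hs0.le hs1.le ha.le
  have hB2 : s*s ≤ s^b := by
    have e : s^(2:ℝ) ≤ s^b := Real.rpow_le_rpow_of_exponent_ge hs0 hs1.le hb.le
    have e2 : s^(2:ℝ) = s*s := by
      rw [show (2:ℝ) = (2:ℕ) by norm_num, Real.rpow_natCast]; ring
    calc s*s = s^(2:ℝ) := e2.symm
      _ ≤ s^b := e
  have hB1 : s^b ≤ 1 := Real.rpow_le_one hs0.le hs1.le (by linarith)
  have hnum : |(-(2-a)*(1 - s ^ a) + (2-b)*(1 - s ^ b))| ≤ 6 * (1-s) := by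
    rw [abs_le]
    constructor <;> nlinarith [mul_le_mul_of_nonneg_left hA2 (by linarith : (0:ℝ) ≤ 2-a),
      mul_le_mul_of_nonneg_left hB2 (by linarith : (0:ℝ) ≤ 2-b)]
  -- denominator bound
  have hDlow := Dlow1 a b ha hab hb hs2.le hs1
  have hDpow : ((b-a)/4 * (1-s))^((3:ℝ)/2) ≤ (s^a - s^b)^((3:ℝ)/2) :=
    Real.rpow_le_rpow (by positivity) hDlow (by norm_num)
  have hsplit : ((b-a)/4 * (1-s))^((3:ℝ)/2) = ((b-a)/4)^((3:ℝ)/2) * (1-s)^((3:ℝ)/2) :=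
    Real.mul_rpow hk.le h1s.le
  rw [Real.norm_eq_abs, abs_div, abs_of_pos hDp]
  have step : |(-(2-a)*(1 - s ^ a) + (2-b)*(1 - s ^ b))| / (s^a - s^b)^((3:ℝ)/2)
      ≤ (6*(1-s)) / (((b-a)/4)^((3:ℝ)/2) * (1-s)^((3:ℝ)/2)) := by
    apply div_le_div₀ (by linarith) hnum
    · rw [← hsplit]; positivity
    · rw [← hsplit]; exact hDpow
  refine step.trans (le_of_eq ?_)
  have e : (1-s)^(-(1:ℝ)/2) = (1-s) / (1-s)^((3:ℝ)/2) := by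
    rw [show (-(1:ℝ)/2) = 1 - (3:ℝ)/2 by norm_num, Real.rpow_sub h1s, Real.rpow_one]
  rw [e]
  have h1 : ((b-a)/4)^((3:ℝ)/2) ≠ 0 := by positivity
  have h2 : (1-s)^((3:ℝ)/2) ≠ 0 := by positivity
  field_simp

open Set Filter Topology in
private lemma bound0_G (a b : ℝ) (ha : 0 < a) (hab : a < b) {s : ℝ}
    (hs : s ∈ Ioc (0:ℝ) (1/2)) :
    ‖s^(-a) * (s ^ a - s ^ b) ^ (-(1:ℝ)/2)‖
      ≤ (1 - (1/2:ℝ)^(b-a))^(-(1:ℝ)/2) * s ^ (-(a*(3/2))) := by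
  obtain ⟨hs0, hs2⟩ := hs
  have hs1 : s < 1 := lt_of_le_of_lt hs2 (by norm_num)
  set c0 : ℝ := 1 - (1/2:ℝ)^(b-a) with hc0def
  have hc0 : 0 < c0 := by
    have : (1/2:ℝ)^(b-a) < 1 := Real.rpow_lt_one (by norm_num) (by norm_num) (by linarith)
    simp only [hc0def]; linarith
  have hsa : 0 < s^a := Real.rpow_pos_of_pos hs0 _
  have hsna : 0 < s^(-a) := Real.rpow_pos_of_pos hs0 _
  have hD : 0 < s^a - s^b := stmt11_Dpos a b hab hs0 hs1
  have hfac : s^a - s^b = s^a * (1 - s^(b-a)) := by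
    rw [mul_sub, mul_one, ← Real.rpow_add hs0]; ring_nf
  have hba : s^(b-a) ≤ (1/2:ℝ)^(b-a) := Real.rpow_le_rpow hs0.le hs2 (by linarith)
  have hDlow : s^a * c0 ≤ s^a - s^b := by
    rw [hfac]
    apply mul_le_mul_of_nonneg_left _ hsa.le
    simp only [hc0def]; linarith
  have hDbound : (s^a - s^b)^(-(1:ℝ)/2) ≤ (s^a * c0)^(-(1:ℝ)/2) :=
    Real.rpow_le_rpow_of_nonpos (by positivity) hDlow (by norm_num)
  rw [Real.norm_eq_abs, abs_mul, abs_of_pos hsna, abs_of_pos (Real.rpow_pos_of_pos hD _)]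
  have step : s^(-a) * (s^a - s^b)^(-(1:ℝ)/2) ≤ s^(-a) * (s^a * c0)^(-(1:ℝ)/2) :=
    mul_le_mul_of_nonneg_left hDbound hsna.le
  refine step.trans (le_of_eq ?_)
  rw [Real.mul_rpow hsa.le hc0.le, ← Real.rpow_mul hs0.le,
    show -(a*(3/2)) = -a + a * (-(1:ℝ)/2) by ring, Real.rpow_add hs0]
  ring

open Set Filter Topology in
private lemma bound1_G (a b : ℝ) (ha : 0 < a) (hab : a < b) (hb : b < 2) (ha1 : a < 1) {s : ℝ}
    (hs : s ∈ Ioo (1/2:ℝ) 1) :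
    ‖s^(-a) * (s ^ a - s ^ b) ^ (-(1:ℝ)/2)‖
      ≤ (2 * ((b-a)/4)^(-(1:ℝ)/2)) * (1-s) ^ (-(1:ℝ)/2) := by
  obtain ⟨hs2, hs1⟩ := hs
  have hs0 : (0:ℝ) < s := by linarith
  have h1s : (0:ℝ) < 1 - s := by linarith
  have hk : (0:ℝ) < (b-a)/4 := by linarith
  have hD : 0 < s^a - s^b := stmt11_Dpos a b hab hs0 hs1
  have hsna : 0 < s^(-a) := Real.rpow_pos_of_pos hs0 _
  have hsa2 : s^(-a) ≤ 2 := by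
    have h1 : s^(-a) ≤ (1/2:ℝ)^(-a) :=
      Real.rpow_le_rpow_of_nonpos (by norm_num) hs2.le (by linarith)
    have h2 : (1/2:ℝ)^(-a) = (2:ℝ)^a := by
      rw [show (1/2:ℝ) = 2⁻¹ by norm_num, Real.inv_rpow (by norm_num : (0:ℝ) ≤ 2),
        ← Real.rpow_neg (by norm_num : (0:ℝ) ≤ 2)]
      norm_num
    have h3 : (2:ℝ)^a ≤ (2:ℝ)^(1:ℝ) := Real.rpow_le_rpow_of_exponent_le one_le_two ha1.le
    rw [Real.rpow_one] at h3
    linarith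
  have hDlow := Dlow1 a b ha hab hb hs2.le hs1
  have hDbound : (s^a - s^b)^(-(1:ℝ)/2) ≤ ((b-a)/4 * (1-s))^(-(1:ℝ)/2) :=
    Real.rpow_le_rpow_of_nonpos (by positivity) hDlow (by norm_num)
  rw [Real.norm_eq_abs, abs_mul, abs_of_pos hsna, abs_of_pos (Real.rpow_pos_of_pos hD _)]
  have step : s^(-a) * (s^a - s^b)^(-(1:ℝ)/2) ≤ 2 * (((b-a)/4) * (1-s))^(-(1:ℝ)/2) := by
    apply mul_le_mul hsa2 hDbound (Real.rpow_pos_of_pos hD _).le (by norm_num)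
  refine step.trans (le_of_eq ?_)
  rw [Real.mul_rpow hk.le h1s.le]
  ring

open Set Filter Topology in
private lemma stmt11_key (a b : ℝ) (ha : 0 < a) (hab : a < b) (hb : b < 2) (ha' : a < 2/3) :
    ∃ J : ℝ, 0 < J ∧
      (∫ s in Set.Ioo (0:ℝ) 1,
        (-(2-a)*(1 - s ^ a) + (2-b)*(1 - s ^ b)) / (s ^ a - s ^ b) ^ ((3:ℝ)/2))
        = (2-2*a-b) * J := by
  have ha1 : a < 1 := by linarith
  set c : ℝ := 2-2*a-b with hc
  set f : ℝ → ℝ :=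
    fun s => (-(2-a)*(1 - s ^ a) + (2-b)*(1 - s ^ b)) / (s ^ a - s ^ b) ^ ((3:ℝ)/2) with hf
  set G : ℝ → ℝ := fun s => s^(-a) * (s ^ a - s ^ b) ^ (-(1:ℝ)/2) with hG
  have hr : (-1:ℝ) < -(a*(3/2)) := by linarith
  have intf : IntegrableOn f (Ioo (0:ℝ) 1) :=
    integrableOn_of_bounds f _ _ _ hr (cont_f a b hab)
      (fun s hs => bound0_f a b ha hab hb hs) (fun s hs => bound1_f a b ha hab hb ha1 hs)
  have intG : IntegrableOn G (Ioo (0:ℝ) 1) :=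
    integrableOn_of_bounds G _ _ _ hr (cont_G a b hab)
      (fun s hs => bound0_G a b ha hab hs) (fun s hs => bound1_G a b ha hab hb ha1 hs)
  have intf' : IntervalIntegrable f volume 0 1 := by
    rw [intervalIntegrable_iff_integrableOn_Ioc_of_le (by norm_num)]
    exact intf.congr_set_ae Ioo_ae_eq_Ioc.symm
  have intG' : IntervalIntegrable G volume 0 1 := by
    rw [intervalIntegrable_iff_integrableOn_Ioc_of_le (by norm_num)]
    exact intG.congr_set_ae Ioo_ae_eq_Ioc.symm
  have intc : IntervalIntegrable (fun s => f s - c * G s) volume 0 1 :=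
    intf'.sub (intG'.const_mul c)
  have hderiv : ∀ s ∈ Ioo (0:ℝ) 1,
      HasDerivAt (fun x : ℝ => 2*(x - x^(1-a)) * (x^a - x^b)^(-(1:ℝ)/2)) (f s - c * G s) s :=
    fun s hs => deriv_key a b ha hab hs.1 hs.2
  have hftc := intervalIntegral.integral_eq_sub_of_hasDerivAt_of_tendsto
    (by norm_num : (0:ℝ) < 1) hderiv intc
    (tendsto_F_zero a b ha hab ha') (tendsto_F_one a b ha hab hb ha')
  have hsplit : (∫ y in (0:ℝ)..1, (f y - c * G y))
      = (∫ y in (0:ℝ)..1, f y) - c * ∫ y in (0:ℝ)..1, G y := by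
    rw [intervalIntegral.integral_sub intf' (intG'.const_mul c),
      intervalIntegral.integral_const_mul]
  have hJpos : 0 < ∫ y in (0:ℝ)..1, G y := by
    apply intervalIntegral.intervalIntegral_pos_of_pos_on intG' _ (by norm_num)
    intro s hs
    exact mul_pos (Real.rpow_pos_of_pos hs.1 _)
      (Real.rpow_pos_of_pos (stmt11_Dpos a b hab hs.1 hs.2) _)
  refine ⟨∫ y in (0:ℝ)..1, G y, hJpos, ?_⟩
  have h1 : (∫ s in Ioo (0:ℝ) 1, f s) = ∫ y in (0:ℝ)..1, f y := by
    rw [intervalIntegral.integral_of_le (by norm_num : (0:ℝ) ≤ 1),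
      integral_Ioc_eq_integral_Ioo]
  rw [hsplit] at hftc
  show (∫ s in Ioo (0:ℝ) 1, f s) = c * ∫ y in (0:ℝ)..1, G y
  rw [h1]
  linarith

theorem stmt_11 (p q : ℝ) (hp : 1 < p) (hpq : p < q) (hq : q < 5) (hp' : p < 7/3)
    (α β : ℝ) (hα : α = (p-1)/2) (hβ : β = (q-1)/2)
    (H : ℝ) (hH : H = ∫ s in Set.Ioo (0:ℝ) 1,
      (-(2-α)*(1 - s ^ α) + (2-β)*(1 - s ^ β)) / (s ^ α - s ^ β) ^ ((3:ℝ)/2)) :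
    (2*p + q > 7 → H < 0) ∧ (2*p + q = 7 → H = 0) ∧ (2*p + q < 7 → H > 0) := by
  have ha : 0 < α := by rw [hα]; linarith
  have hab : α < β := by rw [hα, hβ]; linarith
  have hb : β < 2 := by rw [hβ]; linarith
  have ha' : α < 2/3 := by rw [hα]; linarith
  obtain ⟨J, hJ, hkey⟩ := stmt11_key α β ha hab hb ha'
  have hc : 2-2*α-β = (7-2*p-q)/2 := by rw [hα, hβ]; ring
  refine ⟨fun h => ?_, fun h => ?_, fun h => ?_⟩
  · rw [hH, hkey]
    exact mul_neg_of_neg_of_pos (by rw [hc]; linarith) hJ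
  · rw [hH, hkey, hc, show (7-2*p-q)/2 = 0 by linarith, zero_mul]
  · rw [hH, hkey]
    exact mul_pos (by rw [hc]; linarith) hJ
end

section
/- Let 1 < p < q < 5 with p ≥ 9/5. Set α = (p-1)/2, β = (q-1)/2. Then the improper integral ∫_0^1 \frac{(1-s^{β})\bigl((5-p+2(q-p))(1-s^{α}) - (5-q)(1-s^{β})\bigr)}{(s^{α}-s^{β})^{5/2}}\,ds diverges to +∞. -/
open MeasureTheory Filter

theorem stmt_13 (p q : ℝ) (hp : 1 < p) (hpq : p < q) (hq : q < 5) (hp' : 9/5 ≤ p)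
    (α β : ℝ) (hα : α = (p-1)/2) (hβ : β = (q-1)/2) :
    Tendsto
      (fun a : ℝ => ∫ s in Set.Ioo a 1,
        (1 - s ^ β) * ((5 - p + 2*(q - p))*(1 - s ^ α) - (5 - q)*(1 - s ^ β)) /
          (s ^ α - s ^ β) ^ ((5:ℝ)/2))
      (nhdsWithin 0 (Set.Ioi 0)) atTop := by
  have hα0 : 0 < α := by rw [hα]; linarith
  have hαβ : α < β := by rw [hα, hβ]; linarith
  have hβ0 : 0 < β := hα0.trans hαβ
  have hα1 : 1 ≤ α * (5/2) := by rw [hα]; nlinarith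
  set A : ℝ := 5 - p + 2*(q - p) with hA
  set B : ℝ := 5 - q with hB
  have hAB : 0 < A - B := by rw [hA, hB]; linarith
  set f : ℝ → ℝ := fun s => (1 - s ^ β) * (A*(1 - s ^ α) - B*(1 - s ^ β)) /
      (s ^ α - s ^ β) ^ ((5:ℝ)/2) with hf
  -- denominator positivity on (0,1)
  have hden : ∀ s ∈ Set.Ioo (0:ℝ) 1, 0 < s ^ α - s ^ β := by
    intro s hs
    have := Real.rpow_lt_rpow_of_exponent_gt hs.1 hs.2 hαβ
    linarith
  -- continuity on (0,1)
  have hcont : ContinuousOn f (Set.Ioo 0 1) := by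
    intro s hs
    have hs0 : s ≠ 0 := ne_of_gt hs.1
    have hrpow : ∀ γ : ℝ, ContinuousWithinAt (fun x : ℝ => x ^ γ) (Set.Ioo (0:ℝ) 1) s :=
      fun γ => (Real.continuousAt_rpow_const s γ (Or.inl hs0)).continuousWithinAt
    have hd : ContinuousWithinAt (fun x : ℝ => (x ^ α - x ^ β) ^ ((5:ℝ)/2))
        (Set.Ioo (0:ℝ) 1) s := by
      apply ContinuousWithinAt.rpow_const ((hrpow α).sub (hrpow β))
      exact Or.inl (ne_of_gt (hden s hs))
    exact ContinuousWithinAt.div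
      (((continuousWithinAt_const.sub (hrpow β))).mul
        ((continuousWithinAt_const.mul (continuousWithinAt_const.sub (hrpow α))).sub
          (continuousWithinAt_const.mul (continuousWithinAt_const.sub (hrpow β)))))
      hd (ne_of_gt (Real.rpow_pos_of_pos (hden s hs) _))
  -- ### near 0: lower bound
  set k : ℝ := (A - B)/2 with hk
  have hk0 : 0 < k := by rw [hk]; linarith
  set G : ℝ → ℝ := fun s => (1 - s ^ β) * (A*(1 - s ^ α) - B*(1 - s ^ β)) /
      (1 - s ^ (β - α)) ^ ((5:ℝ)/2) with hG
  have hrpow0 : ∀ γ : ℝ, 0 < γ → Tendsto (fun s : ℝ => s ^ γ)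
      (nhdsWithin 0 (Set.Ioi 0)) (nhds 0) := by
    intro γ hγ
    have h := (Real.continuousAt_rpow_const 0 γ (Or.inr hγ.le)).tendsto
    rw [Real.zero_rpow (ne_of_gt hγ)] at h
    exact h.mono_left nhdsWithin_le_nhds
  have hGlim : Tendsto G (nhdsWithin 0 (Set.Ioi 0)) (nhds (A - B)) := by
    have h1 := hrpow0 β hβ0
    have h2 := hrpow0 α hα0
    have h3 := hrpow0 (β - α) (by linarith)
    have hnum' : Tendsto (fun s : ℝ => (1 - s ^ β) * (A*(1 - s ^ α) - B*(1 - s ^ β)))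
        (nhdsWithin 0 (Set.Ioi 0)) (nhds ((1 - (0:ℝ)) * (A*(1 - 0) - B*(1 - 0)))) :=
      ((tendsto_const_nhds.sub h1).mul
        ((tendsto_const_nhds.mul (tendsto_const_nhds.sub h2)).sub
          (tendsto_const_nhds.mul (tendsto_const_nhds.sub h1))))
    have hnum : Tendsto (fun s : ℝ => (1 - s ^ β) * (A*(1 - s ^ α) - B*(1 - s ^ β)))
        (nhdsWithin 0 (Set.Ioi 0)) (nhds (A - B)) := by
      have heq : (1 - (0:ℝ)) * (A*(1 - 0) - B*(1 - 0)) = A - B := by ring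
      rwa [heq] at hnum'
    have hden2' : Tendsto (fun s : ℝ => (1 - s ^ (β - α)) ^ ((5:ℝ)/2))
        (nhdsWithin 0 (Set.Ioi 0)) (nhds ((1 - (0:ℝ)) ^ ((5:ℝ)/2))) :=
      (tendsto_const_nhds.sub h3).rpow_const (Or.inr (by norm_num))
    have hden2 : Tendsto (fun s : ℝ => (1 - s ^ (β - α)) ^ ((5:ℝ)/2))
        (nhdsWithin 0 (Set.Ioi 0)) (nhds 1) := by
      have heq : (1 - (0:ℝ)) ^ ((5:ℝ)/2) = 1 := by
        rw [sub_zero, Real.one_rpow]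
      rwa [heq] at hden2'
    have hdiv := hnum.div hden2 one_ne_zero
    rw [div_one] at hdiv
    exact hdiv
  have hfG : ∀ s ∈ Set.Ioo (0:ℝ) 1, f s = G s / s ^ (α * (5/2)) := by
    intro s hs
    have hs0 : (0:ℝ) < s := hs.1
    have hsplit : s ^ α - s ^ β = s ^ α * (1 - s ^ (β - α)) := by
      rw [mul_sub, mul_one, ← Real.rpow_add hs0]
      ring_nf
    have ht0 : 0 ≤ 1 - s ^ (β - α) := by
      have : s ^ (β - α) < 1 := Real.rpow_lt_one hs0.le hs.2 (by linarith)
      linarith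
    simp only [hf, hG]
    rw [hsplit, Real.mul_rpow (Real.rpow_nonneg hs0.le _) ht0, ← Real.rpow_mul hs0.le,
      div_mul_eq_div_div_swap]
  obtain ⟨c, hc01, hclow⟩ : ∃ c ∈ Set.Ioo (0:ℝ) 1, ∀ s ∈ Set.Ioo 0 c, k / s ≤ f s := by
    have hev : ∀ᶠ s in nhdsWithin 0 (Set.Ioi 0), k ≤ G s :=
      hGlim.eventually (eventually_ge_nhds (by rw [hk]; linarith))
    rw [eventually_nhdsWithin_iff, Metric.eventually_nhds_iff] at hev
    obtain ⟨ε, hε, hevb⟩ := hev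
    refine ⟨min (ε/2) (1/2), ⟨by positivity, lt_of_le_of_lt (min_le_right _ _) (by norm_num)⟩, ?_⟩
    intro s hs
    have hs01 : s ∈ Set.Ioo (0:ℝ) 1 :=
      ⟨hs.1, lt_of_lt_of_le hs.2 ((min_le_right _ _).trans (by norm_num))⟩
    have hdist : dist s 0 < ε := by
      rw [Real.dist_eq, sub_zero, abs_of_pos hs.1]
      exact lt_of_lt_of_le hs.2 ((min_le_left _ _).trans (by linarith))
    have hGk : k ≤ G s := hevb hdist hs.1
    rw [hfG s hs01]
    have h1 : s ^ (α * (5/2)) ≤ s := by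
      have h := Real.rpow_le_rpow_of_exponent_ge hs01.1 hs01.2.le
        (by linarith [hα1] : (1:ℝ) ≤ α * (5/2))
      rwa [Real.rpow_one] at h
    have hspos : 0 < s ^ (α * (5/2)) := Real.rpow_pos_of_pos hs01.1 _
    calc k / s ≤ k / s ^ (α * (5/2)) := by
          apply div_le_div_of_nonneg_left hk0.le hspos h1
      _ ≤ G s / s ^ (α * (5/2)) := by gcongr
  -- ### near 1
  have hmem1 : Set.Ioo (0:ℝ) 1 ∈ nhdsWithin 1 (Set.Iio 1) := by
    rw [show Set.Ioo (0:ℝ) 1 = Set.Ioi 0 ∩ Set.Iio 1 from (Set.Ioi_inter_Iio).symm]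
    exact Filter.inter_mem (mem_nhdsWithin_of_mem_nhds (Ioi_mem_nhds one_pos))
      self_mem_nhdsWithin
  have hslope : ∀ γ : ℝ, Tendsto (fun s : ℝ => (1 - s ^ γ) / (1 - s))
      (nhdsWithin 1 (Set.Iio 1)) (nhds γ) := by
    intro γ
    have h := Real.hasDerivAt_rpow_const (x := (1:ℝ)) (p := γ) (Or.inl one_ne_zero)
    rw [hasDerivAt_iff_tendsto_slope] at h
    have h2 := h.mono_left (nhdsWithin_mono 1 (fun x hx => ne_of_lt hx))
    have h3 : Tendsto (fun s : ℝ => (1 - s ^ γ) / (1 - s))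
        (nhdsWithin 1 (Set.Iio 1)) (nhds (γ * (1:ℝ) ^ (γ - 1))) := by
      refine h2.congr fun s => ?_
      rw [slope_def_field, Real.one_rpow, ← neg_div_neg_eq]
      ring_nf
    simpa using h3
  have hT2 : Tendsto (fun s : ℝ => (A*(1 - s ^ α) - B*(1 - s ^ β)) / (1 - s))
      (nhdsWithin 1 (Set.Iio 1)) (nhds (A * α - B * β)) := by
    refine Tendsto.congr (fun s => ?_) (((hslope α).const_mul A).sub ((hslope β).const_mul B))
    ring
  have hT3 : Tendsto (fun s : ℝ => (1 - s) / (s ^ α - s ^ β))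
      (nhdsWithin 1 (Set.Iio 1)) (nhds (β - α)⁻¹) := by
    have h' : Tendsto (fun s : ℝ => (s ^ α - s ^ β) / (1 - s))
        (nhdsWithin 1 (Set.Iio 1)) (nhds (β - α)) := by
      refine Tendsto.congr (fun s => ?_) ((hslope β).sub (hslope α))
      rw [div_sub_div_same]
      congr 1
      ring
    refine Tendsto.congr (fun s => inv_div _ _) (h'.inv₀ (by intro h0; rw [sub_eq_zero] at h0; exact (ne_of_lt hαβ) h0.symm))
  set L : ℝ := β * (A * α - B * β) * ((β - α)⁻¹) ^ ((5:ℝ)/2) with hL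
  have hLlim : Tendsto (fun s : ℝ => ((1 - s ^ β)/(1 - s)) *
      ((A*(1 - s ^ α) - B*(1 - s ^ β)) / (1 - s)) *
      ((1 - s)/(s ^ α - s ^ β)) ^ ((5:ℝ)/2)) (nhdsWithin 1 (Set.Iio 1)) (nhds L) :=
    ((hslope β).mul hT2).mul (hT3.rpow_const (Or.inr (by norm_num)))
  have hfid : ∀ s ∈ Set.Ioo (0:ℝ) 1, f s * (1 - s) ^ ((1:ℝ)/2) =
      ((1 - s ^ β)/(1 - s)) * ((A*(1 - s ^ α) - B*(1 - s ^ β)) / (1 - s)) *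
      ((1 - s)/(s ^ α - s ^ β)) ^ ((5:ℝ)/2) := by
    intro s hs
    have hden' := hden s hs
    have h1s : (0:ℝ) < 1 - s := by linarith [hs.2]
    rw [Real.div_rpow h1s.le hden'.le]
    have h52 : (1 - s) ^ ((5:ℝ)/2) = (1 - s)^2 * (1 - s) ^ ((1:ℝ)/2) := by
      rw [show ((5:ℝ)/2) = (2:ℝ) + 1/2 by norm_num, Real.rpow_add h1s,
        show (2:ℝ) = ((2:ℕ):ℝ) by norm_num, Real.rpow_natCast]
    rw [h52]
    simp only [hf]
    field_simp
  have hflim : Tendsto (fun s : ℝ => f s * (1 - s) ^ ((1:ℝ)/2))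
      (nhdsWithin 1 (Set.Iio 1)) (nhds L) := by
    refine Tendsto.congr' ?_ hLlim
    filter_upwards [hmem1] with s hs
    exact (hfid s hs).symm
  -- ### bound near 1
  obtain ⟨c₁, hc₁, hbound⟩ : ∃ c₁ ∈ Set.Ioo (0:ℝ) 1, ∀ s ∈ Set.Ioo c₁ 1,
      |f s| ≤ (|L| + 1) * (1 - s) ^ (-((1:ℝ)/2)) := by
    have hev : ∀ᶠ s in nhdsWithin 1 (Set.Iio 1), |f s * (1 - s) ^ ((1:ℝ)/2)| ≤ |L| + 1 :=
      hflim.abs.eventually (eventually_le_nhds (by linarith [abs_nonneg L]))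
    have hev2 : ∀ᶠ s in nhdsWithin 1 (Set.Iio 1),
        s ∈ Set.Ioo (0:ℝ) 1 ∧ |f s * (1 - s) ^ ((1:ℝ)/2)| ≤ |L| + 1 :=
      (eventually_of_mem hmem1 (fun s hs => hs)).and hev
    obtain ⟨l, hl, hsub⟩ := mem_nhdsLT_iff_exists_Ioo_subset.mp hev2
    refine ⟨max l (1/2), ⟨lt_of_lt_of_le (by norm_num) (le_max_right _ _),
      max_lt hl (by norm_num)⟩, ?_⟩
    intro s hs
    obtain ⟨hs01, habs⟩ := hsub ⟨lt_of_le_of_lt (le_max_left _ _) hs.1, hs.2⟩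
    have h1s : (0:ℝ) < 1 - s := by linarith [hs.2]
    have hp2 : 0 < (1 - s) ^ ((1:ℝ)/2) := Real.rpow_pos_of_pos h1s _
    rw [abs_mul, abs_of_pos hp2] at habs
    have hle : |f s| ≤ (|L| + 1) / (1 - s) ^ ((1:ℝ)/2) := by
      rw [le_div_iff₀ hp2]; exact habs
    calc |f s| ≤ (|L| + 1) / (1 - s) ^ ((1:ℝ)/2) := hle
      _ = (|L| + 1) * (1 - s) ^ (-((1:ℝ)/2)) := by
          rw [Real.rpow_neg h1s.le, div_eq_mul_inv]
  -- ### integrability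
  have hint_pow : IntegrableOn (fun s : ℝ => (1 - s) ^ (-((1:ℝ)/2))) (Set.Ioo c₁ 1) := by
    have h1 : IntervalIntegrable (fun x : ℝ => x ^ (-((1:ℝ)/2))) volume 0 (1 - c₁) :=
      intervalIntegral.intervalIntegrable_rpow' (by norm_num)
    have h2 := (h1.comp_sub_left 1).symm
    simp only [sub_zero, sub_sub_cancel] at h2
    exact h2.1.mono_set Set.Ioo_subset_Ioc_self
  have hmf : ∀ a b : ℝ, 0 < a → b < 1 → IntegrableOn f (Set.Icc a b) := by
    intro a b ha hb
    exact (hcont.mono (fun s hs => ⟨lt_of_lt_of_le ha hs.1, lt_of_le_of_lt hs.2 hb⟩)).integrableOn_compact isCompact_Icc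
  have hint1 : IntegrableOn f (Set.Ioo c₁ 1) := by
    apply Integrable.mono' (hint_pow.const_mul (|L| + 1))
    · exact ((hcont.mono (fun s hs => ⟨lt_trans hc₁.1 hs.1, hs.2⟩)).aestronglyMeasurable
        measurableSet_Ioo)
    · refine (ae_restrict_iff' measurableSet_Ioo).mpr (ae_of_all _ fun s hs => ?_)
      rw [Real.norm_eq_abs]
      exact hbound s hs
  have hIco : ∀ c0 : ℝ, c0 ∈ Set.Ioo (0:ℝ) 1 → c0 ≤ c₁ → IntegrableOn f (Set.Ico c0 1) := by
    intro c0 h hle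
    have hss : Set.Ico c0 1 ⊆ Set.Icc c0 c₁ ∪ Set.Ioo c₁ 1 := by
      intro s hs
      by_cases h' : s ≤ c₁
      · exact Or.inl ⟨hs.1, h'⟩
      · exact Or.inr ⟨lt_of_not_ge h', hs.2⟩
    exact ((hmf c0 c₁ h.1 hc₁.2).union hint1).mono_set hss
  -- ### assembly
  set c0 : ℝ := min c c₁ with hc0
  have hc00 : c0 ∈ Set.Ioo (0:ℝ) 1 :=
    ⟨lt_min hc01.1 hc₁.1, lt_of_le_of_lt (min_le_left _ _) hc01.2⟩
  have hint2 : IntegrableOn f (Set.Ico c0 1) := hIco c0 hc00 (min_le_right _ _)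
  set C : ℝ := ∫ s in Set.Ico c0 1, f s with hC
  have hkey : ∀ a ∈ Set.Ioo (0:ℝ) c0,
      k * (Real.log c0 - Real.log a) + C ≤ ∫ s in Set.Ioo a 1, f s := by
    intro a ha
    have ha0 : 0 < a := ha.1
    have hac0 : a < c0 := ha.2
    have hintmid : IntegrableOn f (Set.Ioo a c0) :=
      (hmf a c0 ha0 hc00.2).mono_set Set.Ioo_subset_Icc_self
    have hsplit : Set.Ioo a 1 = Set.Ioo a c0 ∪ Set.Ico c0 1 :=
      (Set.Ioo_union_Ico_eq_Ioo hac0 hc00.2.le).symm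
    have hdisj : Disjoint (Set.Ioo a c0) (Set.Ico c0 1) := by
      apply Set.disjoint_left.mpr
      rintro s ⟨_, h2⟩ ⟨h3, _⟩
      exact absurd h3 (not_le.mpr h2)
    rw [hsplit, MeasureTheory.setIntegral_union hdisj measurableSet_Ico hintmid hint2]
    have hintdiv : IntegrableOn (fun s : ℝ => k / s) (Set.Ioo a c0) := by
      refine ((continuousOn_const.div continuousOn_id
        (fun s hs => ne_of_gt (lt_of_lt_of_le ha0 hs.1))).integrableOn_compact
          isCompact_Icc).mono_set Set.Ioo_subset_Icc_self
    have hmono : ∫ s in Set.Ioo a c0, k / s ≤ ∫ s in Set.Ioo a c0, f s := by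
      apply MeasureTheory.setIntegral_mono_on hintdiv hintmid measurableSet_Ioo
      intro s hs
      exact hclow s ⟨lt_trans ha0 hs.1, lt_of_lt_of_le hs.2 (min_le_left _ _)⟩
    have hlogint : ∫ s in Set.Ioo a c0, k / s = k * (Real.log c0 - Real.log a) := by
      rw [← MeasureTheory.integral_Ioc_eq_integral_Ioo,
        ← intervalIntegral.integral_of_le hac0.le]
      have h0 : (0:ℝ) ∉ Set.uIcc a c0 := by
        rw [Set.uIcc_of_le hac0.le]
        intro h0
        exact absurd h0.1 (not_le.mpr ha0)
      simp only [div_eq_mul_inv]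
      rw [intervalIntegral.integral_const_mul, integral_inv h0,
        Real.log_div (ne_of_gt hc00.1) (ne_of_gt ha0)]
    linarith [hmono]
  have hlowlim : Tendsto (fun a : ℝ => k * (Real.log c0 - Real.log a) + C)
      (nhdsWithin 0 (Set.Ioi 0)) atTop := by
    apply tendsto_atTop_add_const_right
    apply Tendsto.const_mul_atTop hk0
    have h2 : Tendsto (fun a : ℝ => -Real.log a) (nhdsWithin 0 (Set.Ioi 0)) atTop :=
      tendsto_neg_atBot_atTop.comp Real.tendsto_log_nhdsGT_zero
    exact (tendsto_atTop_add_const_left _ (Real.log c0) h2).congr (fun a => by ring)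
  refine tendsto_atTop_mono' _ ?_ hlowlim
  filter_upwards [Ioo_mem_nhdsGT_of_mem (Set.left_mem_Ico.mpr hc00.1)] with a ha
  exact hkey a ha
end

section
/- Let h_0 < s_0 be real numbers and let f : (h_0, ∞) → ℝ be continuously differentiable. Assume: (i) f(h) > 0 for all h ≥ s_0; (ii) f' has at most one zero in (h_0, s_0), and if z_0 is such a zero then f' > 0 on (h_0, z_0) and f' < 0 on (z_0, s_0); (iii) f < 0 on (h_0, h_0 + ε) for some ε > 0. Then there exists a unique z_* ∈ (h_0, s_0) such that f < 0 on (h_0, z_*), f(z_*) = 0, f'(z_*) > 0, and f > 0 on (z_*, ∞). -/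
theorem stmt_17 (h₀ s₀ : ℝ) (hs₀ : h₀ < s₀) (f f' : ℝ → ℝ)
    (hderiv : ∀ x ∈ Set.Ioi h₀, HasDerivAt f (f' x) x)
    (hcont : ContinuousOn f' (Set.Ioi h₀))
    (hpos : ∀ h : ℝ, s₀ ≤ h → 0 < f h)
    (huniq : ∀ z₁ ∈ Set.Ioo h₀ s₀, ∀ z₂ ∈ Set.Ioo h₀ s₀, f' z₁ = 0 → f' z₂ = 0 → z₁ = z₂)
    (hshape : ∀ z₀ ∈ Set.Ioo h₀ s₀, f' z₀ = 0 →
      (∀ h ∈ Set.Ioo h₀ z₀, 0 < f' h) ∧ (∀ h ∈ Set.Ioo z₀ s₀, f' h < 0))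
    (hneg : ∃ ε > 0, ∀ h ∈ Set.Ioo h₀ (h₀ + ε), f h < 0) :
    ∃! z : ℝ, z ∈ Set.Ioo h₀ s₀ ∧
      (∀ h ∈ Set.Ioo h₀ z, f h < 0) ∧ f z = 0 ∧ 0 < f' z ∧ (∀ h : ℝ, z < h → 0 < f h) := by
  obtain ⟨ε, hε, hneg⟩ := hneg
  have fcont : ∀ x, h₀ < x → ContinuousAt f x := fun x hx => (hderiv x hx).continuousAt
  have fcontOn : ∀ s : Set ℝ, s ⊆ Set.Ioi h₀ → ContinuousOn f s :=
    fun s hs x hx => (fcont x (hs hx)).continuousWithinAt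
  -- key step: find z₁ with f' > 0 on (h₀, z₁) and f > 0 on [z₁, ∞)
  have key : ∃ z₁, h₀ < z₁ ∧ z₁ ≤ s₀ ∧ (∀ x ∈ Set.Ioo h₀ z₁, 0 < f' x) ∧
      (∀ h, z₁ ≤ h → 0 < f h) := by
    by_cases hzex : ∃ z₀ ∈ Set.Ioo h₀ s₀, f' z₀ = 0
    · obtain ⟨z₀, hz₀, hz₀'⟩ := hzex
      obtain ⟨hA, hB⟩ := hshape z₀ hz₀ hz₀'
      refine ⟨z₀, hz₀.1, hz₀.2.le, hA, ?_⟩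
      have hanti : StrictAntiOn f (Set.Icc z₀ s₀) := by
        apply strictAntiOn_of_deriv_neg (convex_Icc _ _)
        · exact fcontOn _ (fun x hx => lt_of_lt_of_le hz₀.1 hx.1)
        · intro x hx
          rw [interior_Icc] at hx
          rw [(hderiv x (hz₀.1.trans hx.1)).deriv]
          exact hB x hx
      intro h hh
      rcases lt_or_ge h s₀ with h1 | h1
      · have := hanti ⟨hh, h1.le⟩ ⟨hh.trans h1.le, le_rfl⟩ h1
        exact lt_trans (hpos s₀ le_rfl) this
      · exact hpos h h1
    · push_neg at hzex
      refine ⟨s₀, hs₀, le_rfl, ?_, fun h hh => hpos h hh⟩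
      -- find a point with f' > 0 via MVT
      set a := h₀ + min ε (s₀ - h₀) / 2 with ha_def
      have hmin : 0 < min ε (s₀ - h₀) := lt_min hε (by linarith)
      have ha1 : h₀ < a := by simp only [ha_def]; linarith
      have ha2 : a < h₀ + ε := by
        have : min ε (s₀ - h₀) ≤ ε := min_le_left _ _
        simp only [ha_def]; linarith
      have ha3 : a < s₀ := by
        have : min ε (s₀ - h₀) ≤ s₀ - h₀ := min_le_right _ _
        simp only [ha_def]; linarith
      have hfa : f a < 0 := hneg a ⟨ha1, ha2⟩
      obtain ⟨c, hc, hc'⟩ := exists_hasDerivAt_eq_slope f f' ha3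
        (fcontOn _ (fun x hx => lt_of_lt_of_le ha1 hx.1))
        (fun x hx => hderiv x (ha1.trans hx.1))
      have hcpos : 0 < f' c := by
        rw [hc']
        apply div_pos _ (by linarith)
        have := hpos s₀ le_rfl
        linarith
      have hcmem : c ∈ Set.Ioo h₀ s₀ := ⟨ha1.trans hc.1, hc.2⟩
      intro x hx
      rcases lt_trichotomy (f' x) 0 with h1 | h1 | h1
      · exfalso
        rcases lt_or_ge x c with h2 | h2
        · have hsub : Set.Icc x c ⊆ Set.Ioi h₀ := fun y hy => lt_of_lt_of_le hx.1 hy.1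
          have : (0:ℝ) ∈ f' '' Set.Icc x c :=
            intermediate_value_Icc h2.le (hcont.mono hsub) ⟨h1.le, hcpos.le⟩
          obtain ⟨y, hy, hy0⟩ := this
          exact hzex y ⟨lt_of_lt_of_le hx.1 hy.1, lt_of_le_of_lt hy.2 hcmem.2⟩ hy0
        · have h2' : c < x := lt_of_le_of_ne h2 (fun h => by rw [← h] at h1; linarith)
          have hsub : Set.Icc c x ⊆ Set.Ioi h₀ := fun y hy => lt_of_lt_of_le hcmem.1 hy.1
          have : (0:ℝ) ∈ f' '' Set.Icc c x :=
            intermediate_value_Icc' h2'.le (hcont.mono hsub) ⟨h1.le, hcpos.le⟩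
          obtain ⟨y, hy, hy0⟩ := this
          exact hzex y ⟨lt_of_lt_of_le hcmem.1 hy.1, lt_of_le_of_lt hy.2 hx.2⟩ hy0
      · exact absurd h1 (hzex x hx)
      · exact h1
  obtain ⟨z₁, hz₁0, hz₁s, hd, hfpos⟩ := key
  -- choose a' close to h₀
  set a := h₀ + min ε (z₁ - h₀) / 2 with ha_def
  have hmin : 0 < min ε (z₁ - h₀) := lt_min hε (by linarith)
  have ha1 : h₀ < a := by simp only [ha_def]; linarith
  have ha2 : a < h₀ + ε := by
    have : min ε (z₁ - h₀) ≤ ε := min_le_left _ _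
    simp only [ha_def]; linarith
  have ha3 : a < z₁ := by
    have : min ε (z₁ - h₀) ≤ z₁ - h₀ := min_le_right _ _
    simp only [ha_def]; linarith
  have hfa : f a < 0 := hneg a ⟨ha1, ha2⟩
  -- f strictly increasing on [a, z₁]
  have hmono : StrictMonoOn f (Set.Icc a z₁) := by
    apply strictMonoOn_of_deriv_pos (convex_Icc _ _)
    · exact fcontOn _ (fun x hx => lt_of_lt_of_le ha1 hx.1)
    · intro x hx
      rw [interior_Icc] at hx
      rw [(hderiv x (ha1.trans hx.1)).deriv]
      exact hd x ⟨ha1.trans hx.1, hx.2⟩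
  -- find the zero
  have hfz₁ : 0 < f z₁ := hfpos z₁ le_rfl
  obtain ⟨z, hz, hz0⟩ : ∃ z ∈ Set.Icc a z₁, f z = 0 :=
    intermediate_value_Icc ha3.le (fcontOn _ (fun x hx => lt_of_lt_of_le ha1 hx.1))
      ⟨hfa.le, hfz₁.le⟩
  have hza : a < z := lt_of_le_of_ne hz.1 (fun h => by rw [← h] at hz0; linarith)
  have hzz₁ : z < z₁ := lt_of_le_of_ne hz.2 (fun h => by rw [h] at hz0; linarith)
  have hzmem : z ∈ Set.Ioo h₀ s₀ := ⟨ha1.trans hza, lt_of_lt_of_le hzz₁ hz₁s⟩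
  refine ⟨z, ⟨hzmem, ?_, hz0, hd z ⟨hzmem.1, hzz₁⟩, ?_⟩, ?_⟩
  · -- f < 0 on (h₀, z)
    intro h hh
    rcases le_or_gt h a with h1 | h1
    · exact hneg h ⟨hh.1, lt_of_le_of_lt h1 ha2⟩
    · have := hmono ⟨h1.le, (hh.2.trans hzz₁).le⟩ hz hh.2
      linarith
  · -- f > 0 on (z, ∞)
    intro h hh
    rcases lt_or_ge h z₁ with h1 | h1
    · have := hmono hz ⟨(hza.trans hh).le, h1.le⟩ hh
      linarith
    · exact hfpos h h1
  · -- uniqueness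
    rintro z' ⟨hz'mem, hz'neg, hz'0, _, hz'pos⟩
    rcases lt_trichotomy z' z with h1 | h1 | h1
    · have := hz'pos z h1
      linarith
    · exact h1
    · have := hz'neg z ⟨hzmem.1, h1⟩
      linarith
end
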